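/- arXiv:2012.10070 — 11 statements merged into one kernel-verified Lean document; each statement's English description precedes it below -/
import Mathlib

section
/- For every graph G, the b-chromatic number of G is at most m(G), where m(G) = max{k : d_k ≥ k-1} for the non-increasing degree sequence d_1 ≥ d_2 ≥ ... ≥ d_n of G. -/
open SimpleGraph

/-- A proper coloring by natural number colors. -/
def IsProperNat {V : Type*} (G : SimpleGraph V) (c : V → ℕ) : Prop :=
  ∀ ⦃v w⦄, G.Adj v w → c v ≠ c w

/-- A Grundy coloring of `G` with colors `1, …, k`: proper, every color used, and
every vertex of color `j` has a neighbor of each color `i < j`. -/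
def IsGrundyColoring {V : Type*} (G : SimpleGraph V) (k : ℕ) (c : V → ℕ) : Prop :=
  (∀ v, c v ∈ Finset.Icc 1 k) ∧ IsProperNat G c ∧
  (∀ i ∈ Finset.Icc 1 k, ∃ v, c v = i) ∧
  (∀ v, ∀ i, 1 ≤ i → i < c v → ∃ w, G.Adj v w ∧ c w = i)

/-- The Grundy number: the maximum number of colors in a Grundy coloring. -/
noncomputable def grundyNumber {V : Type*} (G : SimpleGraph V) : ℕ :=
  sSup {k | ∃ c : V → ℕ, IsGrundyColoring G k c}

/-- A color-dominating (b-)coloring with colors `1, …, k`: proper, and each color class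
contains a vertex having neighbors in all the other color classes. -/
def IsBColoring {V : Type*} (G : SimpleGraph V) (k : ℕ) (c : V → ℕ) : Prop :=
  (∀ v, c v ∈ Finset.Icc 1 k) ∧ IsProperNat G c ∧
  (∀ i ∈ Finset.Icc 1 k, ∃ v, c v = i ∧
    ∀ j ∈ Finset.Icc 1 k, j ≠ i → ∃ w, G.Adj v w ∧ c w = j)

/-- The b-chromatic number: the maximum number of colors in a b-coloring. -/
noncomputable def bChromatic {V : Type*} (G : SimpleGraph V) : ℕ :=
  sSup {k | ∃ c : V → ℕ, IsBColoring G k c}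

/-- `m(G) = max {k : d_k ≥ k - 1}` for the non-increasing degree sequence; equivalently
the largest `k` such that `G` has `k` vertices of degree at least `k - 1`. -/
noncomputable def mParam {V : Type*} (G : SimpleGraph V) : ℕ :=
  sSup {k | ∃ s : Finset V, s.card = k ∧ ∀ v ∈ s, k - 1 ≤ (G.neighborSet v).ncard}

/-- A graph is b-monotone if the b-chromatic number of every induced subgraph is at most
that of the graph itself. -/
def BMonotone {V : Type*} (G : SimpleGraph V) : Prop :=
  ∀ s : Set V, bChromatic (G.induce s) ≤ bChromatic G

/-- For every graph `G`, `b(G) ≤ m(G)`. -/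
theorem bChromatic_le_mParam {V : Type*} [Fintype V] (G : SimpleGraph V) :
    bChromatic G ≤ mParam G := by
  apply csSup_le'
  rintro k ⟨c, hcmem, hcprop, hc3⟩
  rcases Nat.eq_zero_or_pos k with rfl | hk
  · exact Nat.zero_le _
  have h1 : (1 : ℕ) ∈ Finset.Icc 1 k := Finset.mem_Icc.mpr ⟨le_refl 1, hk⟩
  have hne : Nonempty V := ⟨(hc3 1 h1).choose⟩
  classical
  set f : ℕ → V := fun i =>
    if h : i ∈ Finset.Icc 1 k then (hc3 i h).choose else Classical.arbitrary V with hfdef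
  have hf : ∀ i ∈ Finset.Icc 1 k, c (f i) = i ∧
      ∀ j ∈ Finset.Icc 1 k, j ≠ i → ∃ w, G.Adj (f i) w ∧ c w = j := by
    intro i hi
    simp only [hfdef, dif_pos hi]
    exact (hc3 i hi).choose_spec
  have hinj : Set.InjOn f (Finset.Icc 1 k : Finset ℕ) := by
    intro i hi j hj hij
    have := (hf i hi).1
    rw [hij, (hf j hj).1] at this
    exact this.symm
  set s : Finset V := (Finset.Icc 1 k).image f with hsdef
  have hscard : s.card = k := by
    rw [hsdef, Finset.card_image_of_injOn hinj, Nat.card_Icc]; omega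
  have hdeg : ∀ v ∈ s, k - 1 ≤ (G.neighborSet v).ncard := by
    intro v hv
    rw [hsdef, Finset.mem_image] at hv
    obtain ⟨i, hi, hfi⟩ := hv
    set g : ℕ → V := fun j =>
      if h : ∃ w, G.Adj v w ∧ c w = j then h.choose else Classical.arbitrary V with hgdef
    have hg : ∀ j ∈ (Finset.Icc 1 k).erase i, G.Adj v (g j) ∧ c (g j) = j := by
      intro j hj
      rw [Finset.mem_erase] at hj
      have hex : ∃ w, G.Adj v w ∧ c w = j := by
        rw [← hfi]; exact (hf i hi).2 j hj.2 hj.1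
      simp only [hgdef, dif_pos hex]
      exact hex.choose_spec
    have hginj : Set.InjOn g ((Finset.Icc 1 k).erase i : Finset ℕ) := by
      intro a ha b hb hab
      have := (hg a ha).2
      rw [hab, (hg b hb).2] at this
      exact this.symm
    set t : Finset V := ((Finset.Icc 1 k).erase i).image g with htdef
    have htcard : t.card = k - 1 := by
      rw [htdef, Finset.card_image_of_injOn hginj, Finset.card_erase_of_mem hi,
        Nat.card_Icc]; omega
    have htsub : (↑t : Set V) ⊆ G.neighborSet v := by
      intro w hw
      rw [htdef] at hw
      simp only [Finset.coe_image, Set.mem_image, Finset.mem_coe] at hw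
      obtain ⟨j, hj, rfl⟩ := hw
      exact (hg j hj).1
    calc k - 1 = (↑t : Set V).ncard := by rw [Set.ncard_coe_finset, htcard]
      _ ≤ (G.neighborSet v).ncard :=
        Set.ncard_le_ncard htsub (Set.toFinite _)
  exact le_csSup ⟨Fintype.card V, fun n hn => by
      obtain ⟨s', hs', _⟩ := hn; rw [← hs']; exact Finset.card_le_univ s'⟩
    ⟨s, hscard, hdeg⟩
end

section
/- For every graph G, the Grundy number of G is at most 2·m(G). -/
open SimpleGraph

/-- For every graph `G`, `Γ(G) ≤ 2 m(G)`. -/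
theorem grundy_le_two_mParam {V : Type*} [Fintype V] (G : SimpleGraph V) :
    grundyNumber G ≤ 2 * mParam G := by
  classical
  apply csSup_le'
  rintro k ⟨c, h1, h2, h3, h4⟩
  -- every vertex has degree at least (c v - 1)
  have hdeg : ∀ v : V, c v - 1 ≤ (G.neighborSet v).ncard := by
    intro v
    have H : ∀ i : ℕ, ∃ w, 1 ≤ i → i < c v → G.Adj v w ∧ c w = i := by
      intro i
      by_cases h : 1 ≤ i ∧ i < c v
      · obtain ⟨w, hw⟩ := h4 v i h.1 h.2
        exact ⟨w, fun _ _ => hw⟩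
      · exact ⟨v, fun hh1 hh2 => absurd ⟨hh1, hh2⟩ h⟩
    choose f hf using H
    have hcard : (Finset.Icc 1 (c v - 1)).card ≤ (G.neighborFinset v).card := by
      apply Finset.card_le_card_of_injOn f
      · intro i hi
        simp only [Finset.coe_Icc, Set.mem_Icc, Finset.mem_Icc] at hi
        have := hf i hi.1 (by omega)
        simpa [SimpleGraph.mem_neighborFinset] using this.1
      · intro i hi j hj hij
        simp only [Finset.coe_Icc, Set.mem_Icc] at hi hj
        have hi' := (hf i hi.1 (by omega)).2
        have hj' := (hf j hj.1 (by omega)).2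
        rw [hij] at hi'
        omega
    have h1' : (Finset.Icc 1 (c v - 1)).card = c v - 1 := by
      rw [Nat.card_Icc]; omega
    have h2' : (G.neighborSet v).ncard = (G.neighborFinset v).card := by
      rw [SimpleGraph.neighborFinset, Set.ncard_eq_toFinset_card']
    omega
  by_cases hk : k = 0
  · simp [hk]
  set t := (k + 1) / 2 with ht_def
  have htk : 2 * t ≤ k + 1 ∧ k ≤ 2 * t ∧ 1 ≤ t := by omega
  have H : ∀ i : ℕ, ∃ v, i ∈ Finset.Icc 1 k → c v = i := by
    intro i
    by_cases h : i ∈ Finset.Icc 1 k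
    · obtain ⟨v, hv⟩ := h3 i h
      exact ⟨v, fun _ => hv⟩
    · obtain ⟨v, _⟩ := h3 1 (by simp; omega)
      exact ⟨v, fun hh => absurd hh h⟩
  choose g hg using H
  set s : Finset V := (Finset.Icc (k - t + 1) k).image g with hs_def
  have hs_sub : ∀ i ∈ Finset.Icc (k - t + 1) k, c (g i) = i := by
    intro i hi
    apply hg
    simp only [Finset.mem_Icc] at hi ⊢
    omega
  have hcard : s.card = t := by
    rw [hs_def, Finset.card_image_of_injOn]
    · rw [Nat.card_Icc]; omega
    · intro i hi j hj hij
      have hi' := hs_sub i hi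
      have hj' := hs_sub j hj
      rw [hij] at hi'
      omega
  have hmem : t ∈ {k | ∃ s : Finset V, s.card = k ∧
      ∀ v ∈ s, k - 1 ≤ (G.neighborSet v).ncard} := by
    refine ⟨s, hcard, ?_⟩
    intro v hv
    rw [hs_def, Finset.mem_image] at hv
    obtain ⟨i, hi, rfl⟩ := hv
    have hci := hs_sub i hi
    have hd := hdeg (g i)
    simp only [Finset.mem_Icc] at hi
    omega
  have hbdd : BddAbove {k | ∃ s : Finset V, s.card = k ∧
      ∀ v ∈ s, k - 1 ≤ (G.neighborSet v).ncard} := by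
    refine ⟨Fintype.card V, ?_⟩
    rintro x ⟨s', rfl, -⟩
    exact Finset.card_le_univ s'
  have hle : t ≤ mParam G := le_csSup hbdd hmem
  omega
end

section
/- For any m ≥ 2 and n ≥ 1, the graph G_{m,n} obtained from the complete m-partite graph K_{n,...,n} (with parts B_1,...,B_m where B_i = {v_{i,1},...,v_{i,n}}) by deleting the edges of the n−1 cliques A_j = {v_{1,j},...,v_{m,j}} for j = 1,...,n−1 satisfies Γ(G_{m,n}) ≥ m + n − 1. -/
open SimpleGraph

/-- The graph `G_{m,n}`: the complete `m`-partite graph with parts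
`B_i = {v_{i,1}, …, v_{i,n}}` minus the edges of the cliques `A_j = {v_{1,j}, …, v_{m,j}}`
for `j = 1, …, n-1`.  Vertex `(i, j) : Fin m × Fin n` is `v_{i+1, j+1}`; so
`(i,j) ~ (i',j')` iff `i ≠ i'` and not (`j = j'` and `j+1 ≤ n-1`, i.e. `(j : ℕ) < n - 1`). -/
def Gmn (m n : ℕ) : SimpleGraph (Fin m × Fin n) where
  Adj a b := a.1 ≠ b.1 ∧ ¬ (a.2 = b.2 ∧ (a.2 : ℕ) < n - 1)
  symm := by
    constructor
    rintro ⟨i, j⟩ ⟨i', j'⟩ ⟨h1, h2⟩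
    refine ⟨h1.symm, fun hc => h2 ⟨hc.1.symm, ?_⟩⟩
    exact hc.1 ▸ hc.2
  loopless := by constructor; rintro ⟨i, j⟩ ⟨h, -⟩; exact h rfl

def grundyC (m n : ℕ) : Fin m × Fin n → ℕ :=
  fun p => if (p.2 : ℕ) < n - 1 then (p.2 : ℕ) + 1 else n + p.1

lemma grundyC_isGrundy (m n : ℕ) (hm : 2 ≤ m) (hn : 1 ≤ n) :
    IsGrundyColoring (Gmn m n) (m + n - 1) (grundyC m n) := by
  refine ⟨?_, ?_, ?_, ?_⟩
  · rintro ⟨i, j⟩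
    have hi := i.isLt; have hj := j.isLt
    simp only [grundyC, Finset.mem_Icc]
    split_ifs with h <;> omega
  · rintro ⟨i, j⟩ ⟨i', j'⟩ ⟨hne, hcond⟩
    have hi := i.isLt; have hi' := i'.isLt
    have hne' : (i : ℕ) ≠ (i' : ℕ) := fun h => hne (Fin.ext h)
    simp only [grundyC]
    split_ifs with h1 h2 h2
    · intro h
      have : j = j' := Fin.ext (by omega)
      exact hcond ⟨this, h1⟩
    · omega
    · omega
    · omega
  · intro k hk
    rw [Finset.mem_Icc] at hk
    by_cases hkn : k ≤ n - 1
    · refine ⟨(⟨0, by omega⟩, ⟨k - 1, by omega⟩), ?_⟩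
      simp only [grundyC]
      rw [if_pos (show k - 1 < n - 1 by omega)]
      show k - 1 + 1 = k; omega
    · refine ⟨(⟨k - n, by omega⟩, ⟨n - 1, by omega⟩), ?_⟩
      simp only [grundyC]
      rw [if_neg (show ¬ (n - 1 < n - 1) by omega)]
      show n + (k - n) = k; omega
  · rintro ⟨i, j⟩ k hk1 hk2
    have hi := i.isLt; have hj := j.isLt
    simp only [grundyC] at hk2
    set i' : Fin m := if (i : ℕ) = 0 then ⟨1, by omega⟩ else ⟨0, by omega⟩ with hi'def
    have hi'ne : (i' : ℕ) ≠ (i : ℕ) := by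
      rw [hi'def]; split_ifs with h <;> simp <;> omega
    by_cases hjcol : (j : ℕ) < n - 1
    · rw [if_pos hjcol] at hk2
      have hklt : k - 1 < (j : ℕ) := by omega
      refine ⟨(i', ⟨k - 1, by omega⟩), ⟨fun h => hi'ne (congrArg Fin.val h).symm, ?_⟩, ?_⟩
      · rintro ⟨hc, -⟩
        have := congrArg Fin.val hc
        simp at this; omega
      · simp only [grundyC]
        rw [if_pos (show k - 1 < n - 1 by omega)]
        show k - 1 + 1 = k; omega
    · rw [if_neg hjcol] at hk2
      have hjval : (j : ℕ) = n - 1 := by omega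
      by_cases hkn : k < n
      · refine ⟨(i', ⟨k - 1, by omega⟩), ⟨fun h => hi'ne (congrArg Fin.val h).symm, ?_⟩, ?_⟩
        · rintro ⟨-, hc⟩; exact hjcol hc
        · simp only [grundyC]
          rw [if_pos (show k - 1 < n - 1 by omega)]
          show k - 1 + 1 = k; omega
      · refine ⟨(⟨k - n, by omega⟩, j), ⟨?_, ?_⟩, ?_⟩
        · intro h
          have := congrArg Fin.val h
          simp at this; omega
        · rintro ⟨-, hc⟩; exact hjcol hc
        · simp only [grundyC]
          rw [if_neg hjcol]
          show n + (k - n) = k; omega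

/-- For `m ≥ 2`, `n ≥ 1`, `Γ(G_{m,n}) ≥ m + n - 1`. -/
theorem grundy_Gmn (m n : ℕ) (hm : 2 ≤ m) (hn : 1 ≤ n) :
    m + n - 1 ≤ grundyNumber (Gmn m n) := by
  have key := grundyC_isGrundy m n hm hn
  refine le_csSup ⟨m * n, ?_⟩ ⟨_, key⟩
  rintro k ⟨c, -, -, h3, -⟩
  have hsub : Finset.Icc 1 k ⊆ Finset.image c Finset.univ := by
    intro i hi
    obtain ⟨v, hv⟩ := h3 i hi
    exact Finset.mem_image.2 ⟨v, Finset.mem_univ _, hv⟩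
  have h1 := Finset.card_le_card hsub
  have h2 := Finset.card_image_le (s := (Finset.univ : Finset (Fin m × Fin n))) (f := c)
  simp [Nat.card_Icc] at h1
  simpa using h1.trans h2
end

section
/- For any m ≥ 2 and n ≥ 1, the b-chromatic number of the graph G_{m,n} equals m. -/
open SimpleGraph

/-- For `m ≥ 2`, `n ≥ 1`, `b(G_{m,n}) = m`. -/
theorem bChromatic_Gmn (m n : ℕ) (hm : 2 ≤ m) (hn : 1 ≤ n) :
    bChromatic (Gmn m n) = m := by
  classical
  set S : Set ℕ := {k | ∃ c : Fin m × Fin n → ℕ, IsBColoring (Gmn m n) k c} with hS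
  have last : Fin n := ⟨n - 1, by omega⟩
  -- upper bound: every k ∈ S satisfies k ≤ m
  have hub : ∀ k ∈ S, k ≤ m := by
    rintro k ⟨c, hmem, hprop, hdom⟩
    by_contra hk
    push_neg at hk
    set L : Fin n := ⟨n - 1, by omega⟩ with hL
    -- last column vertices have pairwise distinct colors
    have hadjL : ∀ i i' : Fin m, i ≠ i' → (Gmn m n).Adj (i, L) (i', L) := by
      intro i i' hne
      exact ⟨hne, by simp [hL]⟩
    -- every vertex with color c (i, L) lies in row i
    have hrow : ∀ (i : Fin m) (w : Fin m × Fin n), c w = c (i, L) → w.1 = i := by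
      intro i w hw
      by_contra hne
      have hadj : (Gmn m n).Adj w (i, L) := by
        refine ⟨hne, ?_⟩
        rintro ⟨h1, h2⟩
        rw [h1] at h2
        simp [hL] at h2
      exact hprop hadj hw
    -- the m last-column colors, as a finset
    set T : Finset ℕ := Finset.image (fun i : Fin m => c (i, L)) Finset.univ with hT
    have hTcard : T.card = m := by
      rw [hT, Finset.card_image_of_injective _ ?_, Finset.card_univ, Fintype.card_fin]
      intro i i' h
      by_contra hne
      exact hprop (hadjL i i' hne) h
    -- pick a color b ∈ Icc 1 k not among the last-column colors
    have hsub : ¬ (Finset.Icc 1 k ⊆ T) := by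
      intro h
      have := Finset.card_le_card h
      rw [hTcard, Nat.card_Icc] at this
      omega
    obtain ⟨b, hb, hbT⟩ := Finset.not_subset.mp hsub
    obtain ⟨x, hx, hxdom⟩ := hdom b hb
    -- x must have a neighbor colored c (x.1, L), impossible since that class ⊆ row x.1
    have hcol : c (x.1, L) ∈ Finset.Icc 1 k := hmem _
    have hbne : c (x.1, L) ≠ b := by
      intro h
      exact hbT (h ▸ Finset.mem_image_of_mem _ (Finset.mem_univ x.1))
    obtain ⟨w, hadj, hw⟩ := hxdom (c (x.1, L)) hcol hbne
    have := hrow x.1 w hw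
    exact hadj.1 (by rw [this])
  -- lower bound: m ∈ S via the row coloring
  have hmem : m ∈ S := by
    refine ⟨fun v => (v.1 : ℕ) + 1, ?_, ?_, ?_⟩
    · intro v
      have := v.1.isLt
      simp only [Finset.mem_Icc]
      omega
    · intro v w hadj h
      have h' : (v.1 : ℕ) + 1 = (w.1 : ℕ) + 1 := h
      exact hadj.1 (Fin.ext (by omega))
    · intro i hi
      rw [Finset.mem_Icc] at hi
      refine ⟨(⟨i - 1, by omega⟩, ⟨n - 1, by omega⟩), show i - 1 + 1 = i by omega, ?_⟩
      intro j hj hji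
      rw [Finset.mem_Icc] at hj
      refine ⟨(⟨j - 1, by omega⟩, ⟨n - 1, by omega⟩), ⟨?_, ?_⟩, show j - 1 + 1 = j by omega⟩
      · intro h
        have : i - 1 = j - 1 := congrArg Fin.val h
        omega
      · rintro ⟨-, h2⟩
        simp at h2
  -- conclude via sSup
  have hbdd : BddAbove S := ⟨m, hub⟩
  exact le_antisymm (csSup_le ⟨m, hmem⟩ hub) (le_csSup hbdd hmem)
end

section
/- For any m ≥ 2 and n ≥ 3, the graph G_{m,n} is not b-monotone: it has an induced subgraph H with b(H) > b(G_{m,n}) = m. Specifically, deleting the vertices v_{m,3},...,v_{m,n} yields an induced subgraph with b-chromatic number at least m+1. -/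
open SimpleGraph

/-- Evaluate Gmn adjacency from numeric facts. -/
lemma gmn_adj {m n : ℕ} {a b : Fin m × Fin n}
    (h1 : (a.1 : ℕ) ≠ (b.1 : ℕ))
    (h2 : (a.2 : ℕ) ≠ (b.2 : ℕ) ∨ n - 1 ≤ (a.2 : ℕ)) : (Gmn m n).Adj a b := by
  refine ⟨fun h => h1 (congrArg Fin.val h), ?_⟩
  rintro ⟨hceq, hclt⟩
  rcases h2 with h | h
  · exact h (congrArg Fin.val hceq)
  · omega

lemma bcol_le_card {V : Type*} [Fintype V] (G : SimpleGraph V) (k : ℕ) (c : V → ℕ)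
    (h : IsBColoring G k c) : k ≤ Fintype.card V := by
  classical
  obtain ⟨-, -, h3⟩ := h
  have hsub : Finset.Icc 1 k ⊆ Finset.univ.image c := by
    intro i hi
    obtain ⟨v, hv, -⟩ := h3 i hi
    exact Finset.mem_image.2 ⟨v, Finset.mem_univ _, hv⟩
  have h1 := Finset.card_le_card hsub
  have h2 := Finset.card_image_le (s := (Finset.univ : Finset V)) (f := c)
  rw [Nat.card_Icc] at h1
  rw [Finset.card_univ] at h2
  omega

lemma gmn_upper {m n : ℕ} (hm : 2 ≤ m) (hn : 3 ≤ n) (k : ℕ) (c : Fin m × Fin n → ℕ)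
    (h : IsBColoring (Gmn m n) k c) : k ≤ m := by
  classical
  by_contra hk
  push_neg at hk
  obtain ⟨h1, h2, h3⟩ := h
  have hlast : n - 1 < n := by omega
  set last : Fin n := ⟨n - 1, hlast⟩ with hlastdef
  have hinj : Function.Injective (fun i : Fin m => c (i, last)) := by
    intro i i' hii
    by_contra hne
    exact h2 (gmn_adj (a := (i, last)) (b := (i', last))
      (fun hv => hne (Fin.val_injective hv)) (Or.inr le_rfl)) hii
  have hcardT : (Finset.univ.image fun i : Fin m => c (i, last)).card = m := by
    rw [Finset.card_image_of_injective _ hinj, Finset.card_univ, Fintype.card_fin]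
  have hlt : (Finset.univ.image fun i : Fin m => c (i, last)).card < (Finset.Icc 1 k).card := by
    rw [hcardT, Nat.card_Icc]; omega
  have hTsub : (Finset.univ.image fun i : Fin m => c (i, last)) ⊆ Finset.Icc 1 k := by
    intro b hb
    obtain ⟨i, -, rfl⟩ := Finset.mem_image.1 hb
    exact h1 _
  have hpos : 0 < ((Finset.Icc 1 k) \ (Finset.univ.image fun i : Fin m => c (i, last))).card := by
    rw [Finset.card_sdiff_of_subset hTsub]; omega
  obtain ⟨b, hbmem⟩ := Finset.card_pos.1 hpos
  obtain ⟨hbIcc, hbT⟩ := Finset.mem_sdiff.1 hbmem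
  obtain ⟨v, hvb, hdom⟩ := h3 b hbIcc
  have haIcc := h1 (v.1, last)
  have hane : c (v.1, last) ≠ b := fun he =>
    hbT (Finset.mem_image.2 ⟨v.1, Finset.mem_univ _, he⟩)
  obtain ⟨w, hadj, hcw⟩ := hdom _ haIcc hane
  obtain ⟨hne, -⟩ := hadj
  have hadj2 : (Gmn m n).Adj w (v.1, last) := by
    apply gmn_adj
    · exact fun hv => hne (Fin.val_injective hv).symm
    · rcases eq_or_ne ((w.2 : ℕ)) (n - 1) with he | he
      · right; omega
      · left; exact he
  exact h2 hadj2 (by rw [hcw])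

lemma gmn_lower {m n : ℕ} (hm : 2 ≤ m) (hn : 3 ≤ n) :
    IsBColoring (Gmn m n) m (fun p => (p.1 : ℕ) + 1) := by
  have hlast : n - 1 < n := by omega
  refine ⟨fun v => ?_, ?_, ?_⟩
  · have := v.1.isLt
    simp only [Finset.mem_Icc]; omega
  · rintro v w ⟨hne, -⟩ h
    simp only at h
    exact hne (Fin.val_injective (by omega))
  · intro i hi
    rw [Finset.mem_Icc] at hi
    refine ⟨(⟨i - 1, by omega⟩, ⟨n - 1, hlast⟩), by simp only []; omega, ?_⟩
    intro j hj hji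
    rw [Finset.mem_Icc] at hj
    refine ⟨(⟨j - 1, by omega⟩, ⟨n - 1, hlast⟩), gmn_adj ?_ (Or.inr ?_), ?_⟩
    · show i - 1 ≠ j - 1; omega
    · show n - 1 ≤ n - 1; exact le_rfl
    · show j - 1 + 1 = j; omega

/-- The coloring used on the induced subgraph: columns 0/1 of the first and last
rows get the two special colors `m` and `m+1`; other vertices get their row color. -/
def colF (m i j : ℕ) : ℕ :=
  if j = 0 ∧ (i = 0 ∨ i = m - 1) then m
  else if j = 1 ∧ (i = 0 ∨ i = m - 1) then m + 1
  else i + 1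

lemma induced_lower {m n : ℕ} (hm : 2 ≤ m) (hn : 3 ≤ n) :
    IsBColoring ((Gmn m n).induce {p : Fin m × Fin n | (p.1 : ℕ) < m - 1 ∨ (p.2 : ℕ) < 2})
      (m + 1) (fun v => colF m (v.1.1 : ℕ) (v.1.2 : ℕ)) := by
  have hlast : n - 1 < n := by omega
  refine ⟨fun v => ?_, ?_, ?_⟩
  · have := v.1.1.isLt
    have hv := v.2
    simp only [Set.mem_setOf_eq] at hv
    simp only [Finset.mem_Icc, colF]
    split_ifs <;> omega
  · rintro v w hadj heq
    have hadj' : (Gmn m n).Adj v.1 w.1 := hadj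
    obtain ⟨hne, hcol⟩ := hadj'
    have hne' : (v.1.1 : ℕ) ≠ (w.1.1 : ℕ) := fun h => hne (Fin.val_injective h)
    have hcol' : (v.1.2 : ℕ) ≠ (w.1.2 : ℕ) ∨ n - 1 ≤ (v.1.2 : ℕ) := by
      rcases eq_or_ne ((v.1.2 : ℕ)) ((w.1.2 : ℕ)) with he | he
      · right
        by_contra hlt
        exact hcol ⟨Fin.val_injective he, by omega⟩
      · left; exact he
    have hv := v.2
    have hw := w.2
    simp only [Set.mem_setOf_eq] at hv hw
    have hv1 := v.1.1.isLt
    have hw1 := w.1.1.isLt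
    simp only [colF] at heq
    split_ifs at heq <;> omega
  · intro b hb
    rw [Finset.mem_Icc] at hb
    by_cases hb1 : b ≤ m - 1
    · -- b-vertex (b-1, n-1)
      refine ⟨⟨(⟨b - 1, by omega⟩, ⟨n - 1, hlast⟩), Or.inl (show b - 1 < m - 1 by omega)⟩,
        ?_, ?_⟩
      · show colF m (b - 1) (n - 1) = b
        unfold colF; split_ifs <;> first | omega | simp_all
      · intro b' hb' hne'
        rw [Finset.mem_Icc] at hb'
        by_cases hb'1 : b' ≤ m - 1
        · refine ⟨⟨(⟨b' - 1, by omega⟩, ⟨n - 1, hlast⟩), Or.inl (show b' - 1 < m - 1 by omega)⟩,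
            gmn_adj (show b - 1 ≠ b' - 1 by omega) (Or.inr (show n - 1 ≤ n - 1 from le_rfl)), ?_⟩
          show colF m (b' - 1) (n - 1) = b'
          unfold colF; split_ifs <;> first | omega | simp_all
        · by_cases hb'2 : b' = m
          · refine ⟨⟨(⟨m - 1, by omega⟩, ⟨0, by omega⟩), Or.inr (show (0:ℕ) < 2 by omega)⟩,
              gmn_adj (show b - 1 ≠ m - 1 by omega) (Or.inl (show n - 1 ≠ 0 by omega)), ?_⟩
            show colF m (m - 1) 0 = b'
            unfold colF; split_ifs <;> first | omega | simp_all
          · refine ⟨⟨(⟨m - 1, by omega⟩, ⟨1, by omega⟩), Or.inr (show (1:ℕ) < 2 by omega)⟩,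
              gmn_adj (show b - 1 ≠ m - 1 by omega) (Or.inl (show n - 1 ≠ 1 by omega)), ?_⟩
            show colF m (m - 1) 1 = b'
            unfold colF; split_ifs <;> first | omega | simp_all
    · by_cases hb2 : b = m
      · -- b-vertex (m-1, 0)
        refine ⟨⟨(⟨m - 1, by omega⟩, ⟨0, by omega⟩), Or.inr (show (0:ℕ) < 2 by omega)⟩, ?_, ?_⟩
        · show colF m (m - 1) 0 = b
          unfold colF; split_ifs <;> first | omega | simp_all
        · intro b' hb' hne'
          rw [Finset.mem_Icc] at hb'
          by_cases hb'1 : b' ≤ m - 1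
          · refine ⟨⟨(⟨b' - 1, by omega⟩, ⟨n - 1, hlast⟩), Or.inl (show b' - 1 < m - 1 by omega)⟩,
              gmn_adj (show m - 1 ≠ b' - 1 by omega) (Or.inl (show (0:ℕ) ≠ n - 1 by omega)), ?_⟩
            show colF m (b' - 1) (n - 1) = b'
            unfold colF; split_ifs <;> first | omega | simp_all
          · -- b' must be m+1
            refine ⟨⟨(⟨0, by omega⟩, ⟨1, by omega⟩), Or.inl (show (0:ℕ) < m - 1 by omega)⟩,
              gmn_adj (show m - 1 ≠ 0 by omega) (Or.inl (show (0:ℕ) ≠ 1 by omega)), ?_⟩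
            show colF m 0 1 = b'
            unfold colF; split_ifs <;> first | omega | simp_all
      · -- b = m + 1, b-vertex (m-1, 1)
        refine ⟨⟨(⟨m - 1, by omega⟩, ⟨1, by omega⟩), Or.inr (show (1:ℕ) < 2 by omega)⟩, ?_, ?_⟩
        · show colF m (m - 1) 1 = b
          unfold colF; split_ifs <;> first | omega | simp_all
        · intro b' hb' hne'
          rw [Finset.mem_Icc] at hb'
          by_cases hb'1 : b' ≤ m - 1
          · refine ⟨⟨(⟨b' - 1, by omega⟩, ⟨n - 1, hlast⟩), Or.inl (show b' - 1 < m - 1 by omega)⟩,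
              gmn_adj (show m - 1 ≠ b' - 1 by omega) (Or.inl (show (1:ℕ) ≠ n - 1 by omega)), ?_⟩
            show colF m (b' - 1) (n - 1) = b'
            unfold colF; split_ifs <;> first | omega | simp_all
          · -- b' must be m
            refine ⟨⟨(⟨0, by omega⟩, ⟨0, by omega⟩), Or.inl (show (0:ℕ) < m - 1 by omega)⟩,
              gmn_adj (show m - 1 ≠ 0 by omega) (Or.inl (show (1:ℕ) ≠ 0 by omega)), ?_⟩
            show colF m 0 0 = b'
            unfold colF; split_ifs <;> first | omega | simp_all


/-- For `m ≥ 2`, `n ≥ 3`, `G_{m,n}` is not b-monotone: deleting the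
vertices `v_{m,3}, …, v_{m,n}` (keeping, in 0-based terms, the vertices `(i,j)` with
`i < m - 1` or `j < 2`) yields an induced subgraph with b-chromatic number at least
`m + 1 > m = b(G_{m,n})`. -/
theorem Gmn_not_bMonotone (m n : ℕ) (hm : 2 ≤ m) (hn : 3 ≤ n) :
    m + 1 ≤ bChromatic ((Gmn m n).induce {p : Fin m × Fin n | (p.1 : ℕ) < m - 1 ∨ (p.2 : ℕ) < 2})
      ∧ bChromatic (Gmn m n) = m ∧ ¬ BMonotone (Gmn m n) := by
  classical
  have hup : ∀ k ∈ {k | ∃ c : Fin m × Fin n → ℕ, IsBColoring (Gmn m n) k c}, k ≤ m := by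
    rintro k ⟨c, hc⟩
    exact gmn_upper hm hn k c hc
  have hmem : m ∈ {k | ∃ c : Fin m × Fin n → ℕ, IsBColoring (Gmn m n) k c} :=
    ⟨_, gmn_lower hm hn⟩
  have hGm : bChromatic (Gmn m n) = m :=
    le_antisymm (csSup_le ⟨m, hmem⟩ hup) (le_csSup ⟨m, hup⟩ hmem)
  haveI : Fintype ↥{p : Fin m × Fin n | (p.1 : ℕ) < m - 1 ∨ (p.2 : ℕ) < 2} :=
    Fintype.ofFinite _
  have hind : m + 1 ≤ bChromatic
      ((Gmn m n).induce {p : Fin m × Fin n | (p.1 : ℕ) < m - 1 ∨ (p.2 : ℕ) < 2}) := by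
    refine le_csSup ⟨Fintype.card ↥{p : Fin m × Fin n | (p.1 : ℕ) < m - 1 ∨ (p.2 : ℕ) < 2},
      ?_⟩ ⟨_, induced_lower hm hn⟩
    rintro k ⟨c, hc⟩
    exact bcol_le_card _ k c hc
  refine ⟨hind, hGm, fun hmono => ?_⟩
  have := hmono {p : Fin m × Fin n | (p.1 : ℕ) < m - 1 ∨ (p.2 : ℕ) < 2}
  rw [hGm] at this
  omega
end

section
/- In the tree atom T_k (k ≥ 2), with vertex degrees listed in non-increasing order d_1 ≥ d_2 ≥ ... ≥ d_n (n = 2^{k-1}), one has d_1 = k−1, and for every j with 1 < j ≤ n, d_j = k − ⌈log₂ j⌉. -/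
open SimpleGraph

/-- Vertex type of the tree atoms: `atomV n` has `2^n` vertices; `T_k` lives on `atomV (k-1)`. -/
def atomV : ℕ → Type
  | 0 => Unit
  | n + 1 => atomV n ⊕ atomV n

instance atomV.fintype : ∀ n, Fintype (atomV n)
  | 0 => inferInstanceAs (Fintype Unit)
  | n + 1 => by
    have := atomV.fintype n
    exact inferInstanceAs (Fintype (atomV n ⊕ atomV n))

/-- Adjacency of the tree atom: `T_{k+1}` is `T_k` together with a new leaf attached to
every vertex of `T_k`. -/
def atomAdj : (n : ℕ) → atomV n → atomV n → Prop
  | 0, _, _ => False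
  | n + 1, Sum.inl a, Sum.inl b => atomAdj n a b
  | _ + 1, Sum.inl a, Sum.inr b => a = b
  | _ + 1, Sum.inr a, Sum.inl b => a = b
  | _ + 1, Sum.inr _, Sum.inr _ => False

theorem atomAdj_symm : ∀ n (a b : atomV n), atomAdj n a b → atomAdj n b a
  | 0, _, _, h => h.elim
  | n + 1, Sum.inl a, Sum.inl b, h => atomAdj_symm n a b h
  | _ + 1, Sum.inl _, Sum.inr _, h => h.symm
  | _ + 1, Sum.inr _, Sum.inl _, h => h.symm
  | _ + 1, Sum.inr _, Sum.inr _, h => h.elim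

theorem atomAdj_irrefl : ∀ n (a : atomV n), ¬ atomAdj n a a
  | 0, _, h => h.elim
  | n + 1, Sum.inl a, h => atomAdj_irrefl n a h
  | _ + 1, Sum.inr _, h => h.elim

def atomGraph (n : ℕ) : SimpleGraph (atomV n) where
  Adj := atomAdj n
  symm := ⟨fun a b h => atomAdj_symm n a b h⟩
  loopless := ⟨fun a h => atomAdj_irrefl n a h⟩

/-- The tree atom `T_k` (for `k ≥ 1`), on `2^(k-1)` vertices. -/
def treeAtom (k : ℕ) : SimpleGraph (atomV (k - 1)) := atomGraph (k - 1)


def atomDeg : (n : ℕ) → atomV n → ℕ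
  | 0, _ => 0
  | n + 1, Sum.inl a => atomDeg n a + 1
  | _ + 1, Sum.inr _ => 1

def atomGraphS (n : ℕ) : SimpleGraph (atomV n ⊕ atomV n) := atomGraph (n + 1)

def atomDegS (n : ℕ) : atomV n ⊕ atomV n → ℕ := atomDeg (n + 1)

lemma ncard_atom : ∀ n (v : atomV n), ((atomGraph n).neighborSet v).ncard = atomDeg n v
  | 0, v => by
    have : (atomGraph 0).neighborSet v = ∅ := by
      ext w; simp [SimpleGraph.neighborSet, atomGraph, atomAdj]
    simp [this, atomDeg]
  | n + 1, Sum.inl a => by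
    change ((atomGraphS n).neighborSet (Sum.inl a)).ncard = atomDeg (n + 1) (Sum.inl a)
    have h : (atomGraphS n).neighborSet (Sum.inl a)
        = Sum.inl '' ((atomGraph n).neighborSet a) ∪ {Sum.inr a} := by
      ext w
      cases w with
      | inl b =>
        simp only [SimpleGraph.mem_neighborSet, Set.mem_union, Set.mem_image,
          SimpleGraph.mem_neighborSet, Set.mem_singleton_iff]
        constructor
        · intro hadj; exact Or.inl ⟨b, hadj, rfl⟩
        · rintro (⟨x, hx, hxb⟩ | h)
          · cases Sum.inl_injective hxb; exact hx
          · exact absurd h (by simp)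
      | inr b =>
        simp only [SimpleGraph.mem_neighborSet, Set.mem_union, Set.mem_image,
          Set.mem_singleton_iff]
        constructor
        · intro hadj
          exact Or.inr (by rw [show a = b from hadj])
        · rintro (⟨x, -, hx⟩ | h)
          · exact absurd hx (by simp)
          · cases Sum.inr_injective h
            show a = a
            rfl
      
    have hdisj : Disjoint (Sum.inl '' ((atomGraph n).neighborSet a))
        ({Sum.inr a} : Set (atomV n ⊕ atomV n)) := by
      rw [Set.disjoint_singleton_right]
      rintro ⟨b, -, hb⟩
      exact absurd hb (by simp)
    have : Fintype (atomV (n+1)) := atomV.fintype (n+1)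
    rw [h, Set.ncard_union_eq hdisj (Set.toFinite _) (Set.toFinite _),
      Set.ncard_image_of_injective _ Sum.inl_injective, Set.ncard_singleton,
      ncard_atom n a, atomDeg]
  | n + 1, Sum.inr a => by
    change ((atomGraphS n).neighborSet (Sum.inr a)).ncard = atomDeg (n + 1) (Sum.inr a)
    have h : (atomGraphS n).neighborSet (Sum.inr a) = {Sum.inl a} := by
      ext w
      cases w with
      | inl b =>
        simp only [SimpleGraph.mem_neighborSet, Set.mem_singleton_iff]
        constructor
        · intro hadj; rw [show a = b from hadj]
        · intro h; cases Sum.inl_injective h; show a = a; rfl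
      | inr b =>
        simp only [SimpleGraph.mem_neighborSet, Set.mem_singleton_iff]
        constructor
        · intro hadj; exact hadj.elim
        · intro h; exact absurd h (by simp)
    rw [h, Set.ncard_singleton, atomDeg]

/-- Canonical enumeration of the vertices of `atomV n`. -/
def atomEnum : (n : ℕ) → Multiset (atomV n)
  | 0 => {PUnit.unit}
  | n + 1 => (atomEnum n).map Sum.inl + (atomEnum n).map Sum.inr

lemma univ_val_eq : ∀ n, (Finset.univ : Finset (atomV n)).val = atomEnum n
  | 0 => rfl
  | n + 1 => by
    show (@Finset.univ (atomV n ⊕ atomV n) (atomV.fintype (n+1))).val = _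
    rw [Subsingleton.elim (atomV.fintype (n+1)) (instFintypeSum (atomV n) (atomV n))]
    rw [← Finset.univ_disjSum_univ, Finset.val_disjSum]
    show Multiset.disjSum _ _ = _
    rw [Multiset.disjSum, univ_val_eq n]
    rfl

lemma log2_le_of_lt_pow {j n : ℕ} (hj : j < 2 ^ (n+1)) : Nat.log 2 j ≤ n := by
  rcases Nat.eq_zero_or_pos j with h | h
  · simp [h]
  · exact Nat.lt_succ_iff.mp (Nat.log_lt_of_lt_pow h.ne' hj)

lemma card_atomEnum : ∀ n, Multiset.card (atomEnum n) = 2 ^ n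
  | 0 => rfl
  | n + 1 => by
    show Multiset.card (α := atomV n ⊕ atomV n) ((atomEnum n).map Sum.inl + (atomEnum n).map Sum.inr) = _
    rw [Multiset.card_add, Multiset.card_map, Multiset.card_map, card_atomEnum n,
      pow_succ, mul_two]

lemma deg_multiset : ∀ n, Multiset.map (atomDeg n) (atomEnum n)
    = (Multiset.range (2 ^ n)).map (fun j => n - Nat.log 2 j)
  | 0 => by simp [atomEnum, atomDeg]; rfl
  | n + 1 => by
    show Multiset.map (atomDegS n) ((atomEnum n).map Sum.inl + (atomEnum n).map Sum.inr) = _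
    rw [Multiset.map_add, Multiset.map_map, Multiset.map_map]
    have h1 : (atomDegS n) ∘ Sum.inl = fun a : atomV n => atomDeg n a + 1 := rfl
    have h2 : (atomDegS n) ∘ Sum.inr = fun _ : atomV n => 1 := rfl
    rw [h1, h2]
    have IH := deg_multiset n
    have e1 : Multiset.map (fun a : atomV n => atomDeg n a + 1) (atomEnum n)
        = (Multiset.range (2 ^ n)).map (fun j => n + 1 - Nat.log 2 j) := by
      have h3 : Multiset.map (fun a : atomV n => atomDeg n a + 1) (atomEnum n)
          = Multiset.map (· + 1) (Multiset.map (atomDeg n) (atomEnum n)) := by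
        rw [Multiset.map_map]; rfl
      rw [h3, IH, Multiset.map_map]
      apply Multiset.map_congr rfl
      intro j hj
      simp only [Multiset.mem_range] at hj
      have : Nat.log 2 j ≤ n := log2_le_of_lt_pow (hj.trans (Nat.pow_lt_pow_succ one_lt_two))
      simp only [Function.comp_apply]
      omega
    have e2 : Multiset.map (fun _ : atomV n => (1:ℕ)) (atomEnum n)
        = (Multiset.range (2 ^ n)).map (fun j => n + 1 - Nat.log 2 (2 ^ n + j)) := by
      have hc : ∀ j ∈ Multiset.range (2 ^ n),
          (fun j => n + 1 - Nat.log 2 (2 ^ n + j)) j = (fun _ => (1:ℕ)) j := by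
        intro j hj
        simp only [Multiset.mem_range] at hj
        have hlog : Nat.log 2 (2 ^ n + j) = n := by
          apply Nat.log_eq_of_pow_le_of_lt_pow
          · exact Nat.le_add_right _ _
          · rw [pow_succ]; omega
        simp only [hlog]
        omega
      rw [Multiset.map_congr rfl hc, Multiset.map_const', Multiset.map_const',
        Multiset.card_range, card_atomEnum n]
    rw [e1, e2, pow_succ, mul_two, Multiset.range_add, Multiset.map_add, Multiset.map_map]
    rfl


lemma clog2_succ {m : ℕ} (hm : 1 ≤ m) : Nat.clog 2 (m + 1) = Nat.log 2 m + 1 := by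
  apply le_antisymm
  · exact (Nat.clog_le_iff_le_pow one_lt_two).mpr (Nat.lt_pow_succ_log_self one_lt_two m)
  · have h1 : m + 1 ≤ 2 ^ Nat.clog 2 (m + 1) := Nat.le_pow_clog one_lt_two _
    have h2 : Nat.log 2 m < Nat.clog 2 (m + 1) :=
      Nat.log_lt_of_lt_pow (by omega) (by omega)
    omega

/-- In `T_k` (`k ≥ 2`), for any non-increasing enumeration
`d 0 ≥ d 1 ≥ …` of the vertex degrees (`d i` is the degree `d_{i+1}` in 1-based terms),
one has `d_1 = k - 1` and `d_j = k - ⌈log₂ j⌉` for `1 < j ≤ 2^(k-1)`. -/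
theorem degreeSeq_treeAtom (k : ℕ) (hk : 2 ≤ k)
    (e : Fin (2 ^ (k - 1)) ≃ atomV (k - 1))
    (d : Fin (2 ^ (k - 1)) → ℕ)
    (hd : ∀ i, d i = ((treeAtom k).neighborSet (e i)).ncard)
    (hmono : Antitone d) :
    d ⟨0, Nat.pow_pos (by norm_num)⟩ = k - 1 ∧
      ∀ j : Fin (2 ^ (k - 1)), 1 ≤ (j : ℕ) →
        d j = k - Nat.clog 2 ((j : ℕ) + 1) := by
  have hdf : d = fun j : Fin (2 ^ (k - 1)) => (k - 1) - Nat.log 2 (j : ℕ) := by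
    have hmult : (↑(List.ofFn d) : Multiset ℕ)
        = (↑(List.ofFn (fun j : Fin (2 ^ (k - 1)) => (k - 1) - Nat.log 2 (j : ℕ))) :
            Multiset ℕ) := by
      rw [← Fin.univ_val_map, ← Fin.univ_val_map]
      have hde : d = fun i => atomDeg (k - 1) (e i) := by
        funext i; rw [hd i]; exact ncard_atom (k - 1) (e i)
      rw [hde]
      have h1 : Multiset.map (fun i : Fin (2 ^ (k - 1)) => atomDeg (k - 1) (e i))
            Finset.univ.val
          = Multiset.map (atomDeg (k - 1)) (Multiset.map e Finset.univ.val) := by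
        rw [Multiset.map_map]; rfl
      rw [h1, Multiset.map_univ_val_equiv, univ_val_eq, deg_multiset]
      have hval : Multiset.map Fin.val (Finset.univ : Finset (Fin (2 ^ (k - 1)))).val
          = Multiset.range (2 ^ (k - 1)) := by
        rw [Fin.univ_def]
        show ((List.finRange (2 ^ (k - 1))).map Fin.val : Multiset ℕ) = _
        rw [show (List.finRange _).map Fin.val = List.range (2 ^ (k - 1)) from List.ext_getElem (by simp) (by simp)]
        rfl
      calc (Multiset.range (2 ^ (k - 1))).map (fun j => (k - 1) - Nat.log 2 j)
          = Multiset.map (fun j => (k - 1) - Nat.log 2 j)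
              (Multiset.map Fin.val (Finset.univ : Finset (Fin (2 ^ (k - 1)))).val) := by
            rw [hval]
        _ = Multiset.map (fun j : Fin (2 ^ (k - 1)) => (k - 1) - Nat.log 2 (j : ℕ))
              Finset.univ.val := by rw [Multiset.map_map]; rfl
    have hperm := Multiset.coe_eq_coe.mp hmult
    have hsd : (List.ofFn d).Pairwise (· ≥ ·) :=
      List.pairwise_ofFn.mpr fun i j hij => hmono hij.le
    have hsf : (List.ofFn (fun j : Fin (2 ^ (k - 1)) =>
        (k - 1) - Nat.log 2 (j : ℕ))).Pairwise (· ≥ ·) := by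
      refine List.pairwise_ofFn.mpr fun i j hij => ?_
      exact Nat.sub_le_sub_left (Nat.log_mono_right hij.le) (k - 1)
    exact List.ofFn_inj.mp (hperm.eq_of_pairwise' hsd hsf)
  constructor
  · rw [hdf]
    simp
  · intro j hj
    rw [hdf]
    show (k - 1) - Nat.log 2 (j : ℕ) = k - Nat.clog 2 ((j : ℕ) + 1)
    rw [clog2_succ hj]
    omega
end

section
/- The tree atom T_k is not pivoted; consequently b(T_k) = m(T_k). -/
open SimpleGraph

/-- A vertex is dense if its degree is at least `m(G) - 1`. -/
def DenseVtx {V : Type*} (G : SimpleGraph V) (v : V) : Prop :=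
  mParam G - 1 ≤ (G.neighborSet v).ncard

/-- A tree (here: graph) is pivoted if it has exactly `m(G)` dense vertices and there is a
non-dense vertex `v` such that every dense vertex is adjacent to `v` or to a dense vertex
adjacent to `v`, and every dense vertex adjacent to `v` and to another dense vertex has
degree exactly `m(G) - 1`. -/
def Pivoted {V : Type*} (G : SimpleGraph V) : Prop :=
  {v : V | DenseVtx G v}.ncard = mParam G ∧
  ∃ v : V, ¬ DenseVtx G v ∧
    (∀ u, DenseVtx G u → G.Adj u v ∨ ∃ w, DenseVtx G w ∧ G.Adj w v ∧ G.Adj u w) ∧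
    (∀ u, DenseVtx G u → G.Adj u v → (∃ w, DenseVtx G w ∧ w ≠ v ∧ G.Adj u w) →
      (G.neighborSet u).ncard = mParam G - 1)

namespace AtomAux

def aval : {n : ℕ} → atomV n → ℕ
  | 0, _ => 0
  | n+1, Sum.inl a => aval a
  | n+1, Sum.inr a => 2^n + aval a

theorem aval_lt : ∀ {n : ℕ} (v : atomV n), aval v < 2^n
  | 0, _ => by simp [aval]
  | n+1, Sum.inl a => lt_of_lt_of_le (aval_lt a) (by rw [pow_succ]; omega)
  | n+1, Sum.inr a => by have := aval_lt a; rw [pow_succ]; simp [aval]; omega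

theorem aval_inj : ∀ {n : ℕ} (v w : atomV n), aval v = aval w → v = w
  | 0, (), (), _ => rfl
  | n+1, Sum.inl a, Sum.inl b, h => by rw [aval_inj a b h]
  | n+1, Sum.inl a, Sum.inr b, h => by
      have := aval_lt a; simp [aval] at h; omega
  | n+1, Sum.inr a, Sum.inl b, h => by
      have := aval_lt b; simp [aval] at h; omega
  | n+1, Sum.inr a, Sum.inr b, h => by
      simp [aval] at h; rw [aval_inj a b h]

theorem aval_surj : ∀ {n : ℕ} (x : ℕ), x < 2^n → ∃ v : atomV n, aval v = x
  | 0, x, hx => ⟨(), by simp at hx; simp [aval, hx.symm]⟩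
  | n+1, x, hx => by
      by_cases h : x < 2^n
      · obtain ⟨v, hv⟩ := aval_surj (n := n) x h
        exact ⟨Sum.inl v, hv⟩
      · obtain ⟨v, hv⟩ := aval_surj (n := n) (x - 2^n) (by rw [pow_succ] at hx; omega)
        exact ⟨Sum.inr v, by simp [aval, hv]; omega⟩

/-- `y` is a child of `x` in the binomial tree with `n` levels. -/
def Rel (n x y : ℕ) : Prop := ∃ t, t < n ∧ x < 2^t ∧ y = x + 2^t

theorem rel_lift {n x y : ℕ} (hx : x < 2^n) (hy : y < 2^n) :
    Rel (n+1) x y ↔ Rel n x y := by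
  constructor
  · rintro ⟨t, ht, hxt, rfl⟩
    refine ⟨t, ?_, hxt, rfl⟩
    rcases Nat.lt_succ_iff_lt_or_eq.mp ht with h | rfl
    · exact h
    · omega
  · rintro ⟨t, ht, hxt, rfl⟩; exact ⟨t, by omega, hxt, rfl⟩

theorem adj_iff : ∀ {n : ℕ} (v w : atomV n),
    atomAdj n v w ↔ (Rel n (aval v) (aval w) ∨ Rel n (aval w) (aval v))
  | 0, _, _ => by
      simp only [atomAdj, Rel]
      constructor
      · exact False.elim
      · rintro (⟨t, ht, _⟩ | ⟨t, ht, _⟩) <;> omega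
  | n+1, Sum.inl a, Sum.inl b => by
      show atomAdj n a b ↔ _
      rw [adj_iff a b]
      simp only [aval]
      rw [rel_lift (aval_lt a) (aval_lt b), rel_lift (aval_lt b) (aval_lt a)]
  | n+1, Sum.inl a, Sum.inr b => by
      show a = b ↔ _
      simp only [aval]
      constructor
      · rintro rfl
        exact Or.inl ⟨n, by omega, aval_lt a, by omega⟩
      · rintro (⟨t, ht, hxt, he⟩ | ⟨t, ht, hxt, he⟩)
        · rcases Nat.lt_succ_iff_lt_or_eq.mp ht with h | rfl
          · exfalso
            have h2 : (2:ℕ)^(t+1) ≤ 2^n := Nat.pow_le_pow_right (by omega) h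
            have := aval_lt b
            rw [pow_succ] at h2
            omega
          · have : aval a = aval b := by omega
            exact aval_inj a b this
        · exfalso
          have := aval_lt a
          omega
  | n+1, Sum.inr a, Sum.inl b => by
      show a = b ↔ _
      simp only [aval]
      constructor
      · rintro rfl
        exact Or.inr ⟨n, by omega, aval_lt a, by omega⟩
      · rintro (⟨t, ht, hxt, he⟩ | ⟨t, ht, hxt, he⟩)
        · exfalso
          have := aval_lt b
          omega
        · rcases Nat.lt_succ_iff_lt_or_eq.mp ht with h | rfl
          · exfalso
            have h2 : (2:ℕ)^(t+1) ≤ 2^n := Nat.pow_le_pow_right (by omega) h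
            have := aval_lt a
            rw [pow_succ] at h2
            omega
          · have : aval b = aval a := by omega
            exact (aval_inj a b this.symm)
  | n+1, Sum.inr a, Sum.inr b => by
      show False ↔ _
      simp only [aval]
      constructor
      · exact False.elim
      · rintro (⟨t, ht, hxt, he⟩ | ⟨t, ht, hxt, he⟩) <;>
        · have h2 : (2:ℕ)^t ≤ 2^n := Nat.pow_le_pow_right (by omega) (by omega)
          omega


/-! ### Neighbor values and degree -/

def clearT (x : ℕ) : ℕ := x - 2^(Nat.log 2 x)

theorem log_add_pow {x t : ℕ} (h : x < 2^t) : Nat.log 2 (x + 2^t) = t :=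
  Nat.log_eq_of_pow_le_of_lt_pow (by omega) (by rw [pow_succ]; omega)

theorem clearT_add_pow {x t : ℕ} (h : x < 2^t) : clearT (x + 2^t) = x := by
  rw [clearT, log_add_pow h]; omega

theorem clearT_lt {x : ℕ} (hx : x ≠ 0) : clearT x < x :=
  Nat.sub_lt (by omega) (Nat.pow_pos (by omega))

theorem rel_parent {n x : ℕ} (hx : x ≠ 0) (hxn : x < 2^n) : Rel n (clearT x) x := by
  have h1 : 2^(Nat.log 2 x) ≤ x := Nat.pow_log_le_self 2 hx
  have h2 : x < 2^(Nat.log 2 x + 1) := Nat.lt_pow_succ_log_self (by omega) x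
  have h3 : Nat.log 2 x < n := Nat.log_lt_of_lt_pow hx hxn
  refine ⟨Nat.log 2 x, h3, ?_, ?_⟩ <;> (rw [clearT]; rw [pow_succ] at h2; omega)

theorem rel_unique {n x y : ℕ} (h : Rel n y x) : y = clearT x ∧ x ≠ 0 := by
  obtain ⟨t, ht, hyt, rfl⟩ := h
  refine ⟨(clearT_add_pow hyt).symm, by positivity⟩

/-- Finset of values of the neighbors of the vertex with value `x`. -/
def nbrF (n x : ℕ) : Finset ℕ :=
  ((Finset.range n).filter (fun t => x < 2^t)).image (fun t => x + 2^t) ∪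
    (if x = 0 then ∅ else {clearT x})

theorem mem_nbrF {n x y : ℕ} (hx : x < 2^n) :
    y ∈ nbrF n x ↔ Rel n x y ∨ Rel n y x := by
  rw [nbrF]
  simp only [Finset.mem_union, Finset.mem_image, Finset.mem_filter, Finset.mem_range]
  constructor
  · rintro (⟨t, ⟨ht, hxt⟩, rfl⟩ | hy)
    · exact Or.inl ⟨t, ht, hxt, rfl⟩
    · by_cases h0 : x = 0
      · simp [h0] at hy
      · simp [h0] at hy
        subst hy
        exact Or.inr (rel_parent h0 hx)
  · rintro (⟨t, ht, hxt, rfl⟩ | h)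
    · exact Or.inl ⟨t, ⟨ht, hxt⟩, rfl⟩
    · obtain ⟨rfl, h0⟩ := rel_unique h
      simp [h0]

theorem nbrF_lt {n x y : ℕ} (hx : x < 2^n) (hy : y ∈ nbrF n x) : y < 2^n := by
  rw [mem_nbrF hx] at hy
  rcases hy with ⟨t, ht, hxt, rfl⟩ | ⟨t, ht, hxt, he⟩
  · have : (2:ℕ)^(t+1) ≤ 2^n := Nat.pow_le_pow_right (by omega) ht
    rw [pow_succ] at this; omega
  · omega

theorem card_nbrF {n x : ℕ} (hx : x < 2^n) : (nbrF n x).card = n - Nat.log 2 x := by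
  rw [nbrF]
  have hinj : Set.InjOn (fun t => x + 2^t) ((Finset.range n).filter (fun t => x < 2^t)) := by
    intro a _ b _ h
    simp only at h
    have h2 : (2:ℕ)^a = 2^b := Nat.add_left_cancel h
    exact Nat.pow_right_injective (le_refl 2) h2
  by_cases h0 : x = 0
  · subst h0
    rw [if_pos rfl, Finset.union_empty, Finset.card_image_of_injOn hinj]
    simp [Nat.pow_pos]
  · have hlog : Nat.log 2 x < n := Nat.log_lt_of_lt_pow h0 hx
    rw [if_neg h0]
    have hfilter : (Finset.range n).filter (fun t => x < 2^t) =
        Finset.Ico (Nat.log 2 x + 1) n := by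
      ext t
      simp only [Finset.mem_filter, Finset.mem_range, Finset.mem_Ico]
      constructor
      · rintro ⟨ht, hxt⟩
        exact ⟨(Nat.log_lt_iff_lt_pow (by omega) h0).mpr hxt, ht⟩
      · rintro ⟨h1, h2⟩
        exact ⟨h2, (Nat.log_lt_iff_lt_pow (by omega) h0).mp h1⟩
    rw [Finset.card_union_of_disjoint, Finset.card_image_of_injOn hinj, hfilter]
    · simp only [Nat.card_Ico, Finset.card_singleton]
      omega
    · rw [Finset.disjoint_singleton_right]
      simp only [Finset.mem_image, Finset.mem_filter, Finset.mem_range, not_exists]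
      rintro t ⟨_, hxt⟩
      have := clearT_lt h0
      omega

theorem aval_injective {n : ℕ} : Function.Injective (aval (n := n)) :=
  fun v w h => aval_inj v w h

theorem image_neighborSet {n : ℕ} (v : atomV n) :
    aval '' ((atomGraph n).neighborSet v) = ↑(nbrF n (aval v)) := by
  ext y
  simp only [Set.mem_image, SimpleGraph.mem_neighborSet, Finset.coe_sort_coe, Finset.mem_coe]
  constructor
  · rintro ⟨w, hw, rfl⟩
    rw [mem_nbrF (aval_lt v)]
    exact (adj_iff v w).mp hw
  · intro hy
    obtain ⟨w, rfl⟩ := aval_surj y (nbrF_lt (aval_lt v) hy)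
    exact ⟨w, (adj_iff v w).mpr ((mem_nbrF (aval_lt v)).mp hy), rfl⟩

theorem degree_eq {n : ℕ} (v : atomV n) :
    ((atomGraph n).neighborSet v).ncard = n - Nat.log 2 (aval v) := by
  rw [← Set.ncard_image_of_injective _ aval_injective, image_neighborSet,
    Set.ncard_coe_finset, card_nbrF (aval_lt v)]

/-! ### The coloring -/

def SCols (n q x : ℕ) : Finset ℕ := ((nbrF n x) ∩ Finset.range q).image (· + 1)

def Lx (n q x : ℕ) : List ℕ :=
  ((Finset.Icc 1 q).filter (fun c => c ≠ x + 1 ∧ c ∉ SCols n q x)).sort (· ≤ ·)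

def padC (x : ℕ) : ℕ := if x = 0 then 2 else 1

def gcol (n q m x t : ℕ) : ℕ := (Lx n q x).getD (t - m) (padC x)

def fcol (n q m x : ℕ) : ℕ :=
  if x = 0 ∨ x < q then x + 1
  else if m ≤ Nat.log 2 x ∧ clearT x < q then gcol n q m (clearT x) (Nat.log 2 x)
  else if fcol n q m (clearT x) = 1 then 2 else 1
termination_by x
decreasing_by all_goals exact clearT_lt (by omega)

theorem mem_Lx {n q x c : ℕ} :
    c ∈ Lx n q x ↔ (c ∈ Finset.Icc 1 q ∧ c ≠ x + 1 ∧ c ∉ SCols n q x) := by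
  rw [Lx, Finset.mem_sort, Finset.mem_filter]

theorem padC_mem {q : ℕ} (hq : 2 ≤ q) (x : ℕ) : padC x ∈ Finset.Icc 1 q := by
  rw [padC]; split <;> (rw [Finset.mem_Icc]; omega)

theorem padC_ne (x : ℕ) : padC x ≠ x + 1 := by
  rw [padC]; split <;> omega

theorem gcol_mem {n q m : ℕ} (hq : 2 ≤ q) (x t : ℕ) : gcol n q m x t ∈ Finset.Icc 1 q := by
  rw [gcol]
  by_cases h : t - m < (Lx n q x).length
  · rw [List.getD_eq_getElem _ _ h]
    exact (mem_Lx.mp (List.getElem_mem h)).1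
  · rw [List.getD_eq_default _ _ (by omega)]
    exact padC_mem hq x

theorem gcol_ne {n q m : ℕ} (x t : ℕ) : gcol n q m x t ≠ x + 1 := by
  rw [gcol]
  by_cases h : t - m < (Lx n q x).length
  · rw [List.getD_eq_getElem _ _ h]
    exact (mem_Lx.mp (List.getElem_mem h)).2.1
  · rw [List.getD_eq_default _ _ (by omega)]
    exact padC_ne x

theorem fcol_lt {n q m x : ℕ} (hx : x = 0 ∨ x < q) : fcol n q m x = x + 1 := by
  rw [fcol, if_pos hx]

theorem fcol_mem {n q m : ℕ} (hq : 2 ≤ q) (x : ℕ) : fcol n q m x ∈ Finset.Icc 1 q := by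
  rw [fcol]
  split_ifs with h1 h2 h3
  · rw [Finset.mem_Icc]; omega
  · exact gcol_mem hq _ _
  · rw [Finset.mem_Icc]; omega
  · rw [Finset.mem_Icc]; omega

theorem fcol_child {n q m x t : ℕ} (hq : 2 ≤ q) (hxt : x < 2^t) :
    fcol n q m (x + 2^t) ≠ fcol n q m x := by
  have hy0 : x + 2^t ≠ 0 := by have : 0 < (2:ℕ)^t := Nat.pow_pos (by omega); omega
  have hlog : Nat.log 2 (x + 2^t) = t := log_add_pow hxt
  have hcl : clearT (x + 2^t) = x := clearT_add_pow hxt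
  conv_lhs => rw [fcol]
  by_cases h1 : x + 2^t = 0 ∨ x + 2^t < q
  · rw [if_pos h1, fcol_lt (n := n) (m := m) (q := q) (by omega)]
    omega
  · rw [if_neg h1]
    by_cases h2 : m ≤ Nat.log 2 (x + 2^t) ∧ clearT (x + 2^t) < q
    · rw [if_pos h2, hcl, hlog]
      rw [fcol_lt (n := n) (m := m) (q := q) (Or.inr (hcl ▸ h2.2))]
      exact gcol_ne x t
    · rw [if_neg h2, hcl]
      split_ifs with h3
      · omega
      · exact fun h => h3 h.symm

theorem Lx_length {n q x : ℕ} (hq : 2 ≤ q) (hn : 1 ≤ n) (hx : x < q) :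
    (Lx n q x).length ≤ q - 2 := by
  classical
  set c0 : ℕ := if x = 0 then 2 else clearT x + 1 with hc0
  have hc0S : c0 ∈ SCols n q x := by
    rw [SCols, Finset.mem_image]
    by_cases h0 : x = 0
    · refine ⟨1, ?_, by rw [hc0, if_pos h0]⟩
      rw [Finset.mem_inter, Finset.mem_range, nbrF, h0]
      constructor
      · apply Finset.mem_union_left
        rw [Finset.mem_image]
        exact ⟨0, Finset.mem_filter.mpr ⟨Finset.mem_range.mpr (by omega), by norm_num⟩, by norm_num⟩
      · omega
    · have hcx : clearT x < x := clearT_lt h0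
      refine ⟨clearT x, ?_, by rw [hc0, if_neg h0]⟩
      rw [Finset.mem_inter, Finset.mem_range, nbrF, if_neg h0]
      exact ⟨Finset.mem_union_right _ (Finset.mem_singleton_self _), by omega⟩
  have hc0ne : c0 ≠ x + 1 := by
    rw [hc0]; split_ifs with h0
    · omega
    · have := clearT_lt h0; omega
  have hc0Icc : c0 ∈ Finset.Icc 1 q := by
    rw [hc0]; split_ifs with h0
    · rw [Finset.mem_Icc]; omega
    · have := clearT_lt h0; rw [Finset.mem_Icc]; omega
  have hsub : (Finset.Icc 1 q).filter (fun c => c ≠ x + 1 ∧ c ∉ SCols n q x) ⊆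
      ((Finset.Icc 1 q).erase (x+1)).erase c0 := by
    intro c hc
    rw [Finset.mem_filter] at hc
    rw [Finset.mem_erase, Finset.mem_erase]
    exact ⟨fun h => hc.2.2 (h ▸ hc0S), hc.2.1, hc.1⟩
  have hcard := Finset.card_le_card hsub
  rw [Finset.card_erase_of_mem, Finset.card_erase_of_mem] at hcard
  · rw [Lx, Finset.length_sort]
    have : (Finset.Icc 1 q).card = q := by rw [Nat.card_Icc]; omega
    omega
  · rw [Finset.mem_Icc]; omega
  · rw [Finset.mem_erase]; exact ⟨hc0ne, hc0Icc⟩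

theorem exists_bcol (n q : ℕ) (hq2 : 2 ≤ q) (hqn : q ≤ n + 1) (hpow : q ≤ 2^(n+2-q)) :
    ∃ c : atomV n → ℕ, IsBColoring (atomGraph n) q c := by
  classical
  set m := n + 2 - q with hm
  have hmn : m ≤ n := by omega
  have hq2m : q ≤ 2^m := hpow
  have h2mn : (2:ℕ)^m ≤ 2^n := Nat.pow_le_pow_right (by omega) hmn
  have hn1 : 1 ≤ n := by omega
  refine ⟨fun v => fcol n q m (aval v), fun v => fcol_mem hq2 _, ?_, ?_⟩
  · -- proper
    intro v w hadj
    rcases (adj_iff v w).mp hadj with ⟨t, ht, hxt, he⟩ | ⟨t, ht, hxt, he⟩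
    · simp only
      rw [he]
      exact (fcol_child hq2 hxt).symm
    · simp only
      rw [he]
      exact fcol_child hq2 hxt
  · -- b-vertices
    intro i hi
    rw [Finset.mem_Icc] at hi
    set x := i - 1 with hxdef
    have hx : x < q := by omega
    obtain ⟨v, hv⟩ := aval_surj x (lt_of_lt_of_le hx (le_trans hq2m h2mn))
    refine ⟨v, ?_, ?_⟩
    · simp only [hv, fcol_lt (Or.inr hx)]
      omega
    · intro j hj hji
      rw [Finset.mem_Icc] at hj
      by_cases hjS : j ∈ SCols n q x
      · -- neighbor inside S
        rw [SCols, Finset.mem_image] at hjS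
        obtain ⟨y, hy, hyj⟩ := hjS
        rw [Finset.mem_inter, Finset.mem_range] at hy
        obtain ⟨hynb, hyq⟩ := hy
        obtain ⟨w, hw⟩ := aval_surj y (lt_of_lt_of_le hyq (le_trans hq2m h2mn))
        refine ⟨w, ?_, ?_⟩
        · refine (adj_iff v w).mpr ?_
          rw [hv, hw]
          exact (mem_nbrF (lt_of_lt_of_le hx (le_trans hq2m h2mn))).mp hynb
        · simp only [hw]
          rw [fcol_lt (by omega)]
          omega
      · -- private leaf neighbor
        have hjL : j ∈ Lx n q x := mem_Lx.mpr ⟨Finset.mem_Icc.mpr hj, by omega, hjS⟩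
        set l := (Lx n q x).idxOf j with hldef
        have hl : l < (Lx n q x).length := List.idxOf_lt_length_iff.mpr hjL
        have hlen := Lx_length (n := n) hq2 hn1 hx
        have hlq : l < q - 2 := by omega
        set t := m + l with htdef
        have ht : t < n := by omega
        have hxt : x < 2^t := lt_of_lt_of_le (lt_of_lt_of_le hx hq2m)
          (Nat.pow_le_pow_right (by omega) (by omega))
        set y := x + 2^t with hydef
        have hy2n : y < 2^n := by
          have : (2:ℕ)^(t+1) ≤ 2^n := Nat.pow_le_pow_right (by omega) ht
          rw [pow_succ] at this
          omega
        obtain ⟨w, hw⟩ := aval_surj y hy2n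
        refine ⟨w, ?_, ?_⟩
        · refine (adj_iff v w).mpr ?_
          rw [hv, hw]
          exact Or.inl ⟨t, ht, hxt, rfl⟩
        · simp only [hw]
          have hyq : ¬ (y = 0 ∨ y < q) := by
            have h2t : q ≤ 2^t := le_trans hq2m (Nat.pow_le_pow_right (by omega) (by omega))
            omega
          rw [fcol, if_neg hyq, if_pos ?_, hydef]
          · rw [clearT_add_pow hxt, log_add_pow hxt, gcol]
            have : t - m = l := by omega
            rw [this, List.getD_eq_getElem _ _ hl]
            exact List.getElem_idxOf hl
          · rw [hydef, clearT_add_pow hxt, log_add_pow hxt]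
            exact ⟨by omega, hx⟩


theorem add_two_le_two_pow : ∀ {j : ℕ}, 2 ≤ j → j + 2 ≤ 2^j := by
  intro j hj
  induction j with
  | zero => omega
  | succ i ih =>
    rcases Nat.lt_or_ge i 2 with h | h
    · have : i = 1 := by omega
      subst this; norm_num
    · have := ih (by omega)
      rw [pow_succ]; omega

theorem bcol_to_mset {V : Type*} [Fintype V] (G : SimpleGraph V) (k : ℕ) (c : V → ℕ)
    (h : IsBColoring G k c) :
    ∃ s : Finset V, s.card = k ∧ ∀ v ∈ s, k - 1 ≤ (G.neighborSet v).ncard := by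
  classical
  obtain ⟨hr, hp, hb⟩ := h
  rcases Nat.eq_zero_or_pos k with rfl | hk
  · exact ⟨∅, by simp⟩
  choose vf hv1 hv2 using hb
  have h1m : 1 ∈ Finset.Icc 1 k := Finset.mem_Icc.mpr ⟨le_refl 1, hk⟩
  set v₀ : V := vf 1 h1m with hv₀
  set F : ℕ → V := fun i => if h : i ∈ Finset.Icc 1 k then vf i h else v₀ with hF
  have hcF : ∀ i ∈ Finset.Icc 1 k, c (F i) = i := by
    intro i hi
    rw [hF]
    simp only
    rw [dif_pos hi]
    exact hv1 i hi
  refine ⟨(Finset.Icc 1 k).image F, ?_, ?_⟩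
  · rw [Finset.card_image_of_injOn, Nat.card_Icc]
    · omega
    · intro a ha b hb' hab
      have h1 := hcF a ha
      have h2 := hcF b hb'
      rw [hab] at h1
      omega
  · intro v hv
    rw [Finset.mem_image] at hv
    obtain ⟨i, hi, rfl⟩ := hv
    have hFi : F i = vf i hi := by rw [hF]; simp only; rw [dif_pos hi]
    choose wf hw1 hw2 using hv2 i hi
    set Wf : ℕ → V := fun j => if h : j ∈ Finset.Icc 1 k ∧ j ≠ i then wf j h.1 h.2 else v₀
      with hWf
    have hcW : ∀ j, (hj : j ∈ Finset.Icc 1 k ∧ j ≠ i) →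
        c (Wf j) = j ∧ G.Adj (vf i hi) (Wf j) := by
      intro j hj
      rw [hWf]
      simp only
      rw [dif_pos hj]
      exact ⟨hw2 j hj.1 hj.2, hw1 j hj.1 hj.2⟩
    set T : Finset V := ((Finset.Icc 1 k).erase i).image Wf with hT
    have hTcard : T.card = k - 1 := by
      rw [hT, Finset.card_image_of_injOn, Finset.card_erase_of_mem hi, Nat.card_Icc]
      · omega
      · intro a ha b hb' hab
        rw [Finset.mem_coe, Finset.mem_erase] at ha hb'
        have h1 := (hcW a ⟨ha.2, ha.1⟩).1
        have h2 := (hcW b ⟨hb'.2, hb'.1⟩).1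
        rw [hab] at h1
        omega
    have hTsub : (T : Set V) ⊆ G.neighborSet (F i) := by
      intro w hw
      rw [Finset.mem_coe, hT, Finset.mem_image] at hw
      obtain ⟨j, hj, rfl⟩ := hw
      rw [Finset.mem_erase] at hj
      rw [SimpleGraph.mem_neighborSet, hFi]
      exact (hcW j ⟨hj.2, hj.1⟩).2
    calc k - 1 = T.card := hTcard.symm
    _ = (T : Set V).ncard := (Set.ncard_coe_finset T).symm
    _ ≤ (G.neighborSet (F i)).ncard := Set.ncard_le_ncard hTsub (Set.toFinite _)

theorem mset_bddAbove {V : Type*} [Fintype V] (G : SimpleGraph V) :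
    BddAbove {k | ∃ s : Finset V, s.card = k ∧ ∀ v ∈ s, k - 1 ≤ (G.neighborSet v).ncard} := by
  refine ⟨Fintype.card V, ?_⟩
  rintro k ⟨s, hs, _⟩
  rw [← hs, ← Finset.card_univ]
  exact Finset.card_le_univ s

theorem mParam_mem {V : Type*} [Fintype V] (G : SimpleGraph V) :
    ∃ s : Finset V, s.card = mParam G ∧ ∀ v ∈ s, mParam G - 1 ≤ (G.neighborSet v).ncard := by
  classical
  have h0 : (0:ℕ) ∈ {k | ∃ s : Finset V, s.card = k ∧
      ∀ v ∈ s, k - 1 ≤ (G.neighborSet v).ncard} := ⟨∅, Finset.card_empty, by simp⟩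
  exact Nat.sSup_mem ⟨0, h0⟩ (mset_bddAbove G)

theorem two_mem_mset {n : ℕ} (hn : 1 ≤ n) :
    ∃ s : Finset (atomV n), s.card = 2 ∧
      ∀ v ∈ s, 2 - 1 ≤ ((atomGraph n).neighborSet v).ncard := by
  classical
  obtain ⟨v0, hv0⟩ := aval_surj (n := n) 0 (Nat.pow_pos (by omega))
  obtain ⟨v1, hv1⟩ := aval_surj (n := n) 1
    (lt_of_lt_of_le (by norm_num) (Nat.pow_le_pow_right (by omega) hn))
  have hne : v0 ≠ v1 := fun h => by rw [h, hv1] at hv0; omega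
  refine ⟨{v0, v1}, by rw [Finset.card_insert_of_notMem (by simpa using hne)]; rfl, ?_⟩
  intro v hv
  rw [degree_eq]
  rcases Finset.mem_insert.mp hv with rfl | hv
  · rw [hv0]; simpa using hn
  · rw [Finset.mem_singleton.mp hv, hv1]; simpa using hn

theorem mset_elem_le {n q : ℕ} (hq2 : 2 ≤ q)
    (hq : ∃ s : Finset (atomV n), s.card = q ∧
      ∀ v ∈ s, q - 1 ≤ ((atomGraph n).neighborSet v).ncard) :
    q ≤ n + 1 ∧ q ≤ 2^(n+2-q) := by
  classical
  obtain ⟨s, hcard, hdeg⟩ := hq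
  have hsn : s.Nonempty := Finset.card_pos.mp (by omega)
  have hlogle : ∀ v : atomV n, Nat.log 2 (aval v) ≤ n := by
    intro v
    have := Nat.log_mono_right (b := 2) (le_of_lt (aval_lt v))
    rwa [Nat.log_pow (by omega)] at this
  have hqn : q ≤ n + 1 := by
    obtain ⟨v, hv⟩ := hsn
    have := hdeg v hv
    rw [degree_eq] at this
    have := hlogle v
    omega
  refine ⟨hqn, ?_⟩
  have hmem : ∀ v ∈ s, aval v < 2^(n+2-q) := by
    intro v hv
    have h1 := hdeg v hv
    rw [degree_eq] at h1
    have h2 := hlogle v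
    have h3 : Nat.log 2 (aval v) ≤ n + 1 - q := by omega
    calc aval v < 2^(Nat.log 2 (aval v) + 1) := Nat.lt_pow_succ_log_self (by omega) _
    _ ≤ 2^(n+2-q) := Nat.pow_le_pow_right (by omega) (by omega)
  calc q = s.card := hcard.symm
  _ = (s.image aval).card := (Finset.card_image_of_injOn
      (fun a _ b _ h => aval_inj a b h)).symm
  _ ≤ (Finset.range (2^(n+2-q))).card := Finset.card_le_card (by
      intro y hy
      rw [Finset.mem_image] at hy
      obtain ⟨v, hv, rfl⟩ := hy
      rw [Finset.mem_range]
      exact hmem v hv)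
  _ = 2^(n+2-q) := Finset.card_range _

theorem dense_iff {n : ℕ} (hm2 : 2 ≤ mParam (atomGraph n))
    (hmn : mParam (atomGraph n) ≤ n + 1) (v : atomV n) :
    DenseVtx (atomGraph n) v ↔ aval v < 2^(n + 2 - mParam (atomGraph n)) := by
  set m := mParam (atomGraph n) with hm
  rw [DenseVtx, degree_eq]
  have hlogle : Nat.log 2 (aval v) ≤ n := by
    have := Nat.log_mono_right (b := 2) (le_of_lt (aval_lt v))
    rwa [Nat.log_pow (by omega)] at this
  constructor
  · intro h
    calc aval v < 2^(Nat.log 2 (aval v) + 1) := Nat.lt_pow_succ_log_self (by omega) _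
    _ ≤ 2^(n+2-m) := Nat.pow_le_pow_right (by omega) (by omega)
  · intro h
    by_cases h0 : aval v = 0
    · rw [h0]; simp [Nat.log_zero_right]; omega
    · have := Nat.log_lt_of_lt_pow h0 h
      omega


theorem subsingleton_atomV0 : ∀ a b : atomV 0, a = b := fun a b => aval_inj a b rfl

theorem mParam0_le_one : mParam (atomGraph 0) ≤ 1 := by
  apply csSup_le'
  rintro q ⟨s, hs, _⟩
  rw [← hs]
  exact Finset.card_le_one.mpr (fun a _ b _ => subsingleton_atomV0 a b)

theorem two_le_mParam {n : ℕ} (hn : 1 ≤ n) : 2 ≤ mParam (atomGraph n) :=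
  le_csSup (mset_bddAbove _) (two_mem_mset hn)

theorem not_pivoted (n : ℕ) : ¬ Pivoted (atomGraph n) := by
  classical
  rintro ⟨hcount, v, hvnd, hdom, -⟩
  by_cases hn : n = 0
  · subst hn
    exact hvnd (by
      rw [DenseVtx]
      have := mParam0_le_one
      have h2 : mParam (atomGraph 0) - 1 = 0 := by omega
      rw [h2]
      exact Nat.zero_le _)
  · have hn1 : 1 ≤ n := by omega
    have hm2 : 2 ≤ mParam (atomGraph n) := two_le_mParam hn1
    obtain ⟨hmn1, hmpow⟩ := mset_elem_le hm2 (mParam_mem (atomGraph n))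
    set m := mParam (atomGraph n) with hmdef
    set j := n + 2 - m with hjdef
    have hjn0 : j ≤ n := by omega
    have hdiff : ∀ u : atomV n, DenseVtx (atomGraph n) u ↔ aval u < 2^j := by
      intro u
      rw [hjdef, hmdef]
      exact dense_iff hm2 hmn1 u
    -- dense count
    have himg : aval '' {u : atomV n | DenseVtx (atomGraph n) u} = ↑(Finset.range (2^j)) := by
      ext y
      constructor
      · rintro ⟨u, hu, rfl⟩
        rw [Finset.coe_range, Set.mem_Iio]
        exact (hdiff u).mp hu
      · intro hy
        rw [Finset.coe_range, Set.mem_Iio] at hy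
        obtain ⟨u, rfl⟩ := aval_surj y
          (lt_of_lt_of_le hy (Nat.pow_le_pow_right (by omega) hjn0))
        exact ⟨u, (hdiff u).mpr hy, rfl⟩
    have hcnt2 : ({u : atomV n | DenseVtx (atomGraph n) u}).ncard = 2^j := by
      rw [← Set.ncard_image_of_injective _ aval_injective, himg, Set.ncard_coe_finset,
        Finset.card_range]
    have hmj : m = 2^j := by rw [← hcount, hcnt2]
    -- the non-dense vertex
    have hy : 2^j ≤ aval v := by
      by_contra h
      exact hvnd ((hdiff v).mpr (by omega))
    have hjn : j < n := by
      have h1 : (2:ℕ)^j < 2^n := lt_of_le_of_lt hy (aval_lt v)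
      exact (Nat.pow_lt_pow_iff_right (by omega)).mp h1
    have hj1 : 1 ≤ j := by
      by_contra h
      have : j = 0 := by omega
      rw [this] at hmj
      omega
    -- uniqueness of dense neighbors of v
    have huniq : ∀ u : atomV n, DenseVtx (atomGraph n) u → (atomGraph n).Adj u v →
        aval u = clearT (aval v) := by
      intro u hu hadj
      rcases (adj_iff u v).mp hadj with h | h
      · exact (rel_unique h).1
      · exfalso
        obtain ⟨t, ht, hvt, he⟩ := h
        have hd := (hdiff u).mp hu
        omega
    -- existence of a dense neighbor w0 of v
    obtain ⟨u0, hu0⟩ := aval_surj (n := n) 0 (Nat.pow_pos (by omega))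
    have hu0d : DenseVtx (atomGraph n) u0 := (hdiff u0).mpr (by rw [hu0]; positivity)
    obtain ⟨w0, hw0d, hw0v⟩ : ∃ w0, DenseVtx (atomGraph n) w0 ∧ (atomGraph n).Adj w0 v := by
      rcases hdom u0 hu0d with h | ⟨w, hwd, hwv, -⟩
      · exact ⟨u0, hu0d, h⟩
      · exact ⟨w, hwd, hwv⟩
    set x0 := aval w0 with hx0def
    have hx0 : x0 = clearT (aval v) := huniq w0 hw0d hw0v
    have hx0j : x0 < 2^j := (hdiff w0).mp hw0d
    -- all dense vertices lie in a small explicit set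
    set F : Finset ℕ := insert x0
      ((((Finset.range j).filter (fun t => x0 < 2^t)).image (fun t => x0 + 2^t)) ∪
        (if x0 = 0 then ∅ else {clearT x0})) with hFdef
    have hsub : aval '' {u : atomV n | DenseVtx (atomGraph n) u} ⊆ ↑F := by
      rintro _ ⟨u, hu, rfl⟩
      rw [Finset.mem_coe, hFdef, Finset.mem_insert]
      rcases hdom u hu with h | ⟨w, hwd2, hwv2, huw⟩
      · exact Or.inl ((huniq u hu h).trans hx0.symm)
      · have hww0 : w = w0 := aval_inj w w0 ((huniq w hwd2 hwv2).trans hx0.symm)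
        rw [hww0] at huw
        right
        rw [Finset.mem_union]
        rcases (adj_iff u w0).mp huw with h | h
        · obtain ⟨hcl, h0⟩ := rel_unique h
          right
          rw [if_neg h0, Finset.mem_singleton]
          exact hcl
        · obtain ⟨t, ht, hx0t, he⟩ := h
          left
          rw [Finset.mem_image]
          refine ⟨t, ?_, he.symm⟩
          rw [Finset.mem_filter, Finset.mem_range]
          have hud := (hdiff u).mp hu
          have htj : t < j := by
            by_contra hc
            have : (2:ℕ)^j ≤ 2^t := Nat.pow_le_pow_right (by omega) (by omega)
            omega
          exact ⟨htj, hx0t⟩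
    have hmF : m ≤ F.card := by
      calc m = ({u : atomV n | DenseVtx (atomGraph n) u}).ncard := hcount.symm
      _ = (aval '' {u : atomV n | DenseVtx (atomGraph n) u}).ncard :=
          (Set.ncard_image_of_injective _ aval_injective).symm
      _ ≤ (↑F : Set ℕ).ncard := Set.ncard_le_ncard hsub (Set.toFinite _)
      _ = F.card := Set.ncard_coe_finset F
    -- card of F is at most j + 1
    have hFcard : F.card ≤ j + 1 := by
      rw [hFdef]
      refine le_trans (Finset.card_insert_le _ _) ?_
      refine le_trans (Nat.add_le_add_right (Finset.card_union_le _ _) 1) ?_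
      have h1 : (((Finset.range j).filter (fun t => x0 < 2^t)).image
          (fun t => x0 + 2^t)).card ≤ ((Finset.range j).filter (fun t => x0 < 2^t)).card :=
        Finset.card_image_le
      by_cases h0 : x0 = 0
      · have h2 : (if x0 = 0 then (∅ : Finset ℕ) else {clearT x0}).card = 0 := by
          rw [if_pos h0]; rfl
        have h3 := Finset.card_filter_le (Finset.range j) (fun t => x0 < 2^t)
        rw [Finset.card_range] at h3
        omega
      · have h2 : (if x0 = 0 then (∅ : Finset ℕ) else {clearT x0}).card = 1 := by
          rw [if_neg h0]; rfl
        have h3 : ((Finset.range j).filter (fun t => x0 < 2^t)).card ≤ j - 1 := by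
          have hsub2 : (Finset.range j).filter (fun t => x0 < 2^t) ⊆ Finset.Ico 1 j := by
            intro t ht
            rw [Finset.mem_filter, Finset.mem_range] at ht
            rw [Finset.mem_Ico]
            refine ⟨?_, ht.1⟩
            by_contra hc
            have : t = 0 := by omega
            rw [this] at ht
            simp at ht
            omega
          have := Finset.card_le_card hsub2
          rw [Nat.card_Ico] at this
          omega
        omega
    -- final contradiction
    rcases Nat.lt_or_ge j 2 with hj2 | hj2
    · have : j = 1 := by omega
      rw [this] at hmj
      norm_num at hmj
      omega
    · have := add_two_le_two_pow hj2
      omega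


theorem bset_bddAbove (n : ℕ) :
    BddAbove {k | ∃ c : atomV n → ℕ, IsBColoring (atomGraph n) k c} := by
  refine ⟨Fintype.card (atomV n), ?_⟩
  rintro q ⟨c, hc⟩
  obtain ⟨s, hs, -⟩ := bcol_to_mset _ q c hc
  rw [← hs, ← Finset.card_univ]
  exact Finset.card_le_univ s

theorem bChromatic_eq (n : ℕ) : bChromatic (atomGraph n) = mParam (atomGraph n) := by
  classical
  apply le_antisymm
  · apply csSup_le'
    rintro q ⟨c, hc⟩
    exact le_csSup (mset_bddAbove _) (bcol_to_mset _ q c hc)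
  · by_cases hn : n = 0
    · subst hn
      have h1 : (1:ℕ) ∈ {k | ∃ c : atomV 0 → ℕ, IsBColoring (atomGraph 0) k c} := by
        obtain ⟨v, -⟩ := aval_surj (n := 0) 0 (by norm_num)
        refine ⟨fun _ => 1, fun u => by simp, ?_, ?_⟩
        · intro a b hab
          exact absurd hab (by
            have : ¬ atomAdj 0 a b := fun h => h.elim
            exact this)
        · intro i hi
          rw [Finset.mem_Icc] at hi
          have hi1 : i = 1 := by omega
          exact ⟨v, hi1.symm, fun j hj hji => by
            rw [Finset.mem_Icc] at hj
            omega⟩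
      calc mParam (atomGraph 0) ≤ 1 := mParam0_le_one
      _ ≤ bChromatic (atomGraph 0) := le_csSup (bset_bddAbove 0) h1
    · have hn1 : 1 ≤ n := by omega
      have hm2 : 2 ≤ mParam (atomGraph n) := two_le_mParam hn1
      obtain ⟨hmn1, hmpow⟩ := mset_elem_le hm2 (mParam_mem (atomGraph n))
      obtain ⟨c, hc⟩ := exists_bcol n (mParam (atomGraph n)) hm2 hmn1 hmpow
      exact le_csSup (bset_bddAbove n) ⟨c, hc⟩

end AtomAux

open AtomAux in
/-- `T_k` is not pivoted; consequently `b(T_k) = m(T_k)`. -/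
theorem treeAtom_not_pivoted (k : ℕ) (hk : 1 ≤ k) :
    ¬ Pivoted (treeAtom k) ∧ bChromatic (treeAtom k) = mParam (treeAtom k) :=
  ⟨not_pivoted (k - 1), bChromatic_eq (k - 1)⟩
end

section
/- Every tree T satisfies Γ(T) − ⌊log₂(Γ(T)−1)⌋ ≤ b(T), when Γ(T) ≥ 2. -/
open SimpleGraph

namespace GB
open SimpleGraph

open SimpleGraph

/-- fallback color: an element of {1,2} different from q -/
def fb (q : ℕ) : ℕ := if q = 1 then 2 else 1

lemma fb_ne (q : ℕ) : fb q ≠ q := by unfold fb; split <;> omega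
lemma fb_mem (q : ℕ) : fb q = 1 ∨ fb q = 2 := by unfold fb; split <;> simp

def lb (j : ℕ) : ℕ := padicValNat 2 j
def clr (j : ℕ) : ℕ := j - 2 ^ lb j

/-- indices of chosen neighbours of chosen vertex j -/
def nbrIdx (m j : ℕ) : Finset ℕ :=
  (Finset.range m).filter fun j' => (j ≠ 0 ∧ j' = clr j) ∨ (j' ≠ 0 ∧ clr j' = j)

/-- colors still needed at chosen vertex j -/
def NN (m j : ℕ) : Finset ℕ :=
  (Finset.Icc 1 m) \ insert (j+1) ((nbrIdx m j).image (·+1))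

noncomputable def nthc (m j i : ℕ) : ℕ := ((NN m j).sort (·≤·)).getD (i-1) (fb (j+1))

lemma nthc_mem (m j i : ℕ) (hm : 2 ≤ m) :
    nthc m j i ∈ Finset.Icc 1 m ∧ nthc m j i ≠ j + 1 := by
  unfold nthc
  rcases lt_or_ge (i-1) ((NN m j).sort (·≤·)).length with h | h
  · rw [List.getD_eq_getElem _ _ h]
    have hmem : ((NN m j).sort (·≤·))[i-1] ∈ NN m j := by
      rw [← Finset.mem_sort (α := ℕ) (·≤·)]
      exact List.getElem_mem h
    have h1 : ((NN m j).sort (·≤·))[i-1] ∈ Finset.Icc 1 m ∧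
        ((NN m j).sort (·≤·))[i-1] ∉ insert (j+1) ((nbrIdx m j).image (·+1)) := by
      have := hmem
      simp only [NN, Finset.mem_sdiff] at this
      exact this
    refine ⟨h1.1, ?_⟩
    intro hq
    exact h1.2 (by rw [hq]; exact Finset.mem_insert_self _ _)
  · rw [List.getD_eq_default _ _ h]
    refine ⟨?_, fb_ne _⟩
    rcases fb_mem (j+1) with h' | h' <;> rw [h'] <;> simp [Finset.mem_Icc] <;> omega




lemma padic_one : lb 1 = 0 := by simp [lb]
lemma clr_one : clr 1 = 0 := by simp [clr, padic_one]

lemma NN_card (m j : ℕ) (hm : 2 ≤ m) (hj : j < m) : (NN m j).card ≤ m - 2 := by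
  classical
  set o : ℕ := if j = 0 then 1 else clr j with ho
  have hoIdx : o ∈ nbrIdx m j := by
    rw [nbrIdx, Finset.mem_filter, Finset.mem_range]
    by_cases h0 : j = 0
    · refine ⟨by rw [ho, if_pos h0]; omega, Or.inr ⟨by simp [ho, h0], by simp [ho, h0, clr_one]⟩⟩
    · have hcl : clr j < j := Nat.sub_lt (Nat.pos_of_ne_zero h0) (Nat.pow_pos (by norm_num))
      exact ⟨by simp only [ho, if_neg h0]; omega, Or.inl ⟨h0, by simp [ho, h0]⟩⟩
  have hone : o ≠ j := by
    by_cases h0 : j = 0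
    · simp [ho, h0]
    · have hcl : clr j < j := Nat.sub_lt (Nat.pos_of_ne_zero h0) (Nat.pow_pos (by norm_num))
      simp only [ho, if_neg h0]; omega
  have hom : o < m := by
    rw [nbrIdx, Finset.mem_filter, Finset.mem_range] at hoIdx; exact hoIdx.1
  have hsub : NN m j ⊆ (Finset.Icc 1 m) \ ({j+1, o+1} : Finset ℕ) := by
    intro q hq
    rw [NN, Finset.mem_sdiff] at hq
    rw [Finset.mem_sdiff]
    refine ⟨hq.1, ?_⟩
    intro hq2
    apply hq.2
    rcases Finset.mem_insert.mp hq2 with h | h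
    · rw [h]; exact Finset.mem_insert_self _ _
    · rw [Finset.mem_singleton] at h
      rw [h]
      exact Finset.mem_insert_of_mem (Finset.mem_image.mpr ⟨o, hoIdx, rfl⟩)
  have hcard := Finset.card_le_card hsub
  rw [Finset.card_sdiff_of_subset] at hcard
  · have h2 : ({j+1, o+1} : Finset ℕ).card = 2 := by
      rw [Finset.card_insert_of_notMem (by simp; omega), Finset.card_singleton]
    rw [Nat.card_Icc] at hcard
    omega
  · intro q hq
    rcases Finset.mem_insert.mp hq with h | h
    · subst h; simp [Finset.mem_Icc]; omega
    · rw [Finset.mem_singleton] at h; subst h; simp [Finset.mem_Icc]; omega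

variable {V : Type*}

def chSet (u : ℕ → V) (m : ℕ) : Set V := {x | ∃ j < m, u j = x}

open Classical in
noncomputable def jOf (u : ℕ → V) (m : ℕ) (x : V) : ℕ :=
  if h : ∃ j < m, u j = x then h.choose else 0

lemma jOf_lt {u : ℕ → V} {m : ℕ} {x : V} (h : x ∈ chSet u m) : jOf u m x < m := by
  have h' : ∃ j < m, u j = x := h
  rw [jOf, dif_pos h']
  exact h'.choose_spec.1

lemma jOf_spec {u : ℕ → V} {m : ℕ} {x : V} (h : x ∈ chSet u m) : u (jOf u m x) = x := by
  have h' : ∃ j < m, u j = x := h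
  rw [jOf, dif_pos h']
  exact h'.choose_spec.2

noncomputable def depT (par : V → V) (S : Set V) (x : V) : ℕ := sInf {d | par^[d] x ∈ S}
noncomputable def asgnT (par : V → V) (S : Set V) (x : V) : V := par^[depT par S x - 1] x

lemma depT_eq_zero {par : V → V} {S : Set V} {x : V} (h : x ∈ S) : depT par S x = 0 :=
  Nat.sInf_eq_zero.mpr (Or.inl h)

lemma depT_pos {par : V → V} {S : Set V} {x : V} (hex : ∃ d, par^[d] x ∈ S) (h : x ∉ S) :
    depT par S x = depT par S (par x) + 1 := by
  have hne : {d | par^[d] x ∈ S}.Nonempty := hex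
  have hmem := Nat.sInf_mem hne
  set d0 := sInf {d | par^[d] x ∈ S} with hd0
  have hd0ne : d0 ≠ 0 := by
    intro h0
    rw [h0] at hmem
    exact h (by simpa using hmem)
  have hmem' : (d0 - 1) ∈ {d | par^[d] (par x) ∈ S} := by
    have : par^[d0] x = par^[d0-1] (par x) := by
      conv_lhs => rw [show d0 = (d0-1)+1 by omega]
      rw [Function.iterate_succ_apply]
    simpa [Set.mem_setOf_eq, ← this] using hmem
  have hne' : {d | par^[d] (par x) ∈ S}.Nonempty := ⟨d0 - 1, hmem'⟩
  have hmem2 := Nat.sInf_mem hne'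
  set e := sInf {d | par^[d] (par x) ∈ S} with he
  have h1 : e ≤ d0 - 1 := Nat.sInf_le hmem'
  have h2 : d0 ≤ e + 1 := by
    apply Nat.sInf_le
    show par^[e+1] x ∈ S
    rw [Function.iterate_succ_apply]
    exact hmem2
  rw [depT, ← hd0, depT, ← he]
  omega




lemma pow_lb_dvd (j : ℕ) : 2 ^ lb j ∣ j := pow_padicValNat_dvd

lemma pow_lb_le {j : ℕ} (hj : j ≠ 0) : 2 ^ lb j ≤ j :=
  Nat.le_of_dvd (Nat.pos_of_ne_zero hj) (pow_lb_dvd j)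

lemma clr_lt {j : ℕ} (hj : j ≠ 0) : clr j < j :=
  Nat.sub_lt (Nat.pos_of_ne_zero hj) (Nat.pow_pos (by norm_num))

lemma clr_add (j : ℕ) (hj : j ≠ 0) : clr j + 2 ^ lb j = j :=
  Nat.sub_add_cancel (pow_lb_le hj)

lemma lb_le {j s : ℕ} (hj : j ≠ 0) (h : j < 2 ^ (s+1)) : lb j ≤ s := by
  have h2 : (2:ℕ) ^ lb j < 2 ^ (s+1) := lt_of_le_of_lt (pow_lb_le hj) h
  have := (Nat.pow_lt_pow_iff_right (by norm_num : 1 < 2)).mp h2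
  omega

lemma lb_clr_gt {j : ℕ} (hj : j ≠ 0) (hc : clr j ≠ 0) : lb j < lb (clr j) := by
  set v := lb j with hv
  obtain ⟨t, ht⟩ := pow_lb_dvd j
  have hodd : ¬ 2 ∣ t := by
    rintro ⟨s, hs⟩
    have hd : 2 ^ (v + 1) ∣ j := ⟨s, by rw [ht, hs, pow_succ]; ring⟩
    have := (padicValNat_dvd_iff_le hj).mp hd
    simp only [hv, lb] at this ⊢
    omega
  have hkey : clr j = 2 ^ v * (t - 1) := by
    rw [clr, ← hv]
    conv_lhs => rw [ht]
    rw [Nat.mul_sub, mul_one]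
  obtain ⟨s, hs⟩ : 2 ∣ (t - 1) := by
    rcases Nat.even_or_odd t with he | ho
    · exact absurd he.two_dvd hodd
    · obtain ⟨r, hr⟩ := ho; exact ⟨r, by omega⟩
  have hdvd : 2 ^ (v + 1) ∣ clr j := ⟨s, by rw [hkey, hs, pow_succ]; ring⟩
  have := (padicValNat_dvd_iff_le hc).mp hdvd
  simp only [hv, lb] at this ⊢
  omega

lemma clr_inj {a b : ℕ} (ha : a ≠ 0) (hb : b ≠ 0) (h1 : lb a = lb b) (h2 : clr a = clr b) :
    a = b := by
  have e1 := clr_add a ha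
  have e2 := clr_add b hb
  rw [h1, h2] at e1
  omega



variable {V : Type*} {G : SimpleGraph V}

noncomputable def pth (hT : G.IsTree) (root v : V) : G.Walk v root :=
  (hT.existsUnique_path v root).exists.choose

lemma pth_isPath (hT : G.IsTree) (root v : V) : (pth hT root v).IsPath :=
  (hT.existsUnique_path v root).exists.choose_spec

lemma pth_eq (hT : G.IsTree) {root v : V} (p : G.Walk v root) (hp : p.IsPath) :
    p = pth hT root v :=
  (hT.existsUnique_path v root).unique hp (pth_isPath hT root v)

noncomputable def lenT (hT : G.IsTree) (root v : V) : ℕ := (pth hT root v).length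
noncomputable def parT (hT : G.IsTree) (root v : V) : V := (pth hT root v).getVert 1

lemma pth_not_nil (hT : G.IsTree) {root v : V} (hv : v ≠ root) : ¬ (pth hT root v).Nil := by
  intro hnil
  exact hv (Walk.eq_of_length_eq_zero (Walk.nil_iff_length_eq.mp hnil))

lemma parT_root (hT : G.IsTree) (root : V) : parT hT root root = root := by
  have : (Walk.nil : G.Walk root root) = pth hT root root := pth_eq hT _ (by simp)
  rw [parT, ← this]
  rfl

lemma parT_adj (hT : G.IsTree) {root v : V} (hv : v ≠ root) : G.Adj v (parT hT root v) :=
  (pth hT root v).adj_snd (pth_not_nil hT hv)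

lemma pth_tail (hT : G.IsTree) {root v : V} (hv : v ≠ root) :
    (pth hT root v).tail = pth hT root (parT hT root v) :=
  pth_eq hT _ ((pth_isPath hT root v).tail)

lemma lenT_par (hT : G.IsTree) {root v : V} (hv : v ≠ root) :
    lenT hT root (parT hT root v) + 1 = lenT hT root v := by
  rw [lenT, lenT, ← pth_tail hT hv]
  exact Walk.length_tail_add_one (pth_not_nil hT hv)

lemma parT_edge (hT : G.IsTree) (root : V) {x w : V} (hadj : G.Adj x w) :
    parT hT root x = w ∨ parT hT root w = x := by
  classical
  by_cases hw : w ∈ (pth hT root x).support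
  · left
    have ht : ((pth hT root x).takeUntil w hw) = Walk.cons hadj Walk.nil := by
      have h1 : ((pth hT root x).takeUntil w hw).IsPath :=
        (pth_isPath hT root x).takeUntil hw
      have h2 : (Walk.cons hadj (Walk.nil : G.Walk w w)).IsPath := by
        simp [hadj.ne]
      exact (hT.existsUnique_path x w).unique h1 h2
    have hspec := (pth hT root x).take_spec hw
    rw [parT]
    conv_lhs => rw [← hspec, ht]
    simp [Walk.cons_append, Walk.getVert_cons_succ]
  · right
    have hp : (Walk.cons hadj.symm (pth hT root x)).IsPath := by
      rw [Walk.cons_isPath_iff]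
      exact ⟨pth_isPath hT root x, hw⟩
    have := pth_eq hT _ hp
    rw [parT, ← this]
    simp [Walk.getVert_cons_succ]



noncomputable def uF {V : Type*} (nb : V → ℕ → V) (root : V) (m1 : ℕ) (j : ℕ) : V :=
  if h : j = 0 then root else nb (uF nb root m1 (clr j)) (m1 + lb j)
termination_by j
decreasing_by exact clr_lt h

lemma uF_zero {V : Type*} (nb : V → ℕ → V) (root : V) (m1 : ℕ) : uF nb root m1 0 = root := by
  rw [uF]
  simp

lemma uF_succ {V : Type*} (nb : V → ℕ → V) (root : V) (m1 : ℕ) {j : ℕ} (hj : j ≠ 0) :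
    uF nb root m1 j = nb (uF nb root m1 (clr j)) (m1 + lb j) := by
  rw [uF, dif_neg hj]

open Classical in
noncomputable def AA {V : Type*} (c : V → ℕ) (nb : V → ℕ → V) (par : V → V) (u : ℕ → V)
    (m : ℕ) (x : V) : ℕ :=
  if c x ≤ m - 2 ∧ x = nb (par x) (c x) then nthc m (jOf u m (par x)) (c x)
  else fb (jOf u m (par x) + 1)

open Classical in
noncomputable def colF {V : Type*} (c : V → ℕ) (nb : V → ℕ → V) (par : V → V) (u : ℕ → V)
    (m : ℕ) (x : V) : ℕ :=
  if x ∈ chSet u m then jOf u m x + 1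
  else if depT par (chSet u m) x = 1 then AA c nb par u m x
  else if Even (depT par (chSet u m) x) then fb (AA c nb par u m (asgnT par (chSet u m) x))
  else fb (fb (AA c nb par u m (asgnT par (chSet u m) x)))


lemma main {V : Type*} {G : SimpleGraph V} (c : V → ℕ) (k l m : ℕ) (root : V)
    (nb : V → ℕ → V) (u : ℕ → V) (par : V → V) (len : V → ℕ)
    (hroot : c root = k)
    (hnb : ∀ v i, 1 ≤ i → i < c v → G.Adj v (nb v i) ∧ c (nb v i) = i)
    (hu0 : u 0 = root)
    (hus : ∀ j : ℕ, j ≠ 0 → u j = nb (u (clr j)) (m - 1 + lb j))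
    (hproot : par root = root)
    (hplen : ∀ v, v ≠ root → len (par v) + 1 = len v)
    (hpedge : ∀ x w, G.Adj x w → par x = w ∨ par w = x)
    (hm : m = k - l) (hl : l ≤ k - 2) (hk2 : 2 ≤ k) (hklt : k - 1 < 2 ^ (l + 1)) :
    IsBColoring G m (colF c nb par u m) := by
  classical
  have hm2 : 2 ≤ m := by omega
  -- the chain of chosen vertices
  have hchain : ∀ j, j < m → j ≠ 0 →
      G.Adj (u (clr j)) (u j) ∧ c (u j) = m - 1 + lb j ∧ par (u j) = u (clr j) ∧ u j ≠ root := by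
    intro j
    induction j using Nat.strong_induction_on with
    | _ j IH =>
      intro hjm hj0
      have hjlt : j < 2 ^ (l + 1) := by omega
      have hlbj : lb j ≤ l := lb_le hj0 hjlt
      have hclrm : clr j < m := lt_trans (clr_lt hj0) hjm
      have hcval : c (u (clr j)) = if clr j = 0 then k else m - 1 + lb (clr j) := by
        by_cases h : clr j = 0
        · rw [if_pos h, h, hu0, hroot]
        · rw [if_neg h]
          exact (IH (clr j) (clr_lt hj0) hclrm h).2.1
      have hvalid : m - 1 + lb j < c (u (clr j)) := by
        rw [hcval]
        by_cases h : clr j = 0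
        · rw [if_pos h]; omega
        · rw [if_neg h]
          have := lb_clr_gt hj0 h
          omega
      have hnbj := hnb (u (clr j)) (m - 1 + lb j) (by omega) hvalid
      have hujeq := hus j hj0
      have hadj : G.Adj (u (clr j)) (u j) := by rw [hujeq]; exact hnbj.1
      have hcj : c (u j) = m - 1 + lb j := by rw [hujeq]; exact hnbj.2
      have hner : u j ≠ root := by
        intro h
        rw [h, hroot] at hcj
        omega
      refine ⟨hadj, hcj, ?_, hner⟩
      rcases hpedge _ _ hadj.symm with h | h
      · exact h
      · exfalso
        by_cases h0 : clr j = 0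
        · rw [h0, hu0, hproot] at h
          exact hner h.symm
        · have hIH := IH (clr j) (clr_lt hj0) hclrm h0
          rw [hIH.2.2.1] at h
          by_cases h00 : clr (clr j) = 0
          · rw [h00, hu0] at h
            rw [← h, hroot] at hcj
            omega
          · have hclrm2 : clr (clr j) < m := lt_trans (clr_lt h0) hclrm
            have hIH2 := IH (clr (clr j)) (lt_trans (clr_lt h0) (clr_lt hj0)) hclrm2 h00
            have g1 := lb_clr_gt hj0 h0
            have g2 := lb_clr_gt h0 h00
            rw [← h, hIH2.2.1] at hcj
            omega
  have hcch : ∀ j, j < m → m - 1 ≤ c (u j) := by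
    intro j hj
    by_cases h0 : j = 0
    · rw [h0, hu0, hroot]; omega
    · rw [(hchain j hj h0).2.1]; omega
  -- injectivity of u on [0, m)
  have hinj : ∀ a, a < m → ∀ b, b < m → u a = u b → a = b := by
    intro a
    induction a using Nat.strong_induction_on with
    | _ a IH =>
      intro ham b hbm heq
      by_cases ha0 : a = 0
      · by_cases hb0 : b = 0
        · omega
        · exfalso
          have hcb := (hchain b hbm hb0).2.1
          have hlbb : lb b ≤ l := lb_le hb0 (by omega)
          rw [← heq, ha0, hu0, hroot] at hcb
          omega
      · by_cases hb0 : b = 0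
        · exfalso
          have hca := (hchain a ham ha0).2.1
          have hlba : lb a ≤ l := lb_le ha0 (by omega)
          rw [heq, hb0, hu0, hroot] at hca
          omega
        · have hca := hchain a ham ha0
          have hcb := hchain b hbm hb0
          have hlbeq : lb a = lb b := by
            have h1 := hca.2.1
            have h2 := hcb.2.1
            rw [heq] at h1
            omega
          have hpeq : u (clr a) = u (clr b) := by
            rw [← hca.2.2.1, ← hcb.2.2.1, heq]
          have := IH (clr a) (clr_lt ha0) (lt_trans (clr_lt ha0) ham) (clr b)
            (lt_trans (clr_lt hb0) hbm) hpeq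
          exact clr_inj ha0 hb0 hlbeq this
  have hchmem : ∀ j, j < m → u j ∈ chSet u m := fun j hj => ⟨j, hj, rfl⟩
  have hrootch : root ∈ chSet u m := by rw [← hu0]; exact hchmem 0 (by omega)
  have hcge : ∀ x, x ∈ chSet u m → m - 1 ≤ c x := by
    rintro x ⟨j, hj, rfl⟩
    exact hcch j hj
  have hjOfu : ∀ j, j < m → jOf u m (u j) = j := by
    intro j hj
    exact hinj _ (jOf_lt (hchmem j hj)) j hj (jOf_spec (hchmem j hj))
  have hparch : ∀ x, x ∈ chSet u m → par x ∈ chSet u m := by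
    rintro x ⟨j, hj, rfl⟩
    by_cases h0 : j = 0
    · rw [h0, hu0, hproot]; exact hrootch
    · rw [(hchain j hj h0).2.2.1]
      exact hchmem _ (lt_trans (clr_lt h0) hj)
  have hex : ∀ x, ∃ d, par^[d] x ∈ chSet u m := by
    intro x
    generalize hn : len x = n
    induction n using Nat.strong_induction_on generalizing x with
    | _ n IH =>
      by_cases hx : x ∈ chSet u m
      · exact ⟨0, hx⟩
      · have hxr : x ≠ root := fun h => hx (h ▸ hrootch)
        obtain ⟨d, hd⟩ := IH (len (par x)) (by rw [← hn, ← hplen x hxr]; omega) (par x) rfl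
        exact ⟨d + 1, by rw [Function.iterate_succ_apply]; exact hd⟩
  have hdep0 : ∀ x, x ∈ chSet u m → depT par (chSet u m) x = 0 := fun x h => depT_eq_zero h
  have hdepS : ∀ x, x ∉ chSet u m →
      depT par (chSet u m) x = depT par (chSet u m) (par x) + 1 :=
    fun x h => depT_pos (hex x) h
  have hcolch : ∀ j, j < m → colF c nb par u m (u j) = j + 1 := by
    intro j hj
    rw [colF, if_pos (hchmem j hj), hjOfu j hj]
  have hAA : ∀ x, AA c nb par u m x ∈ Finset.Icc 1 m ∧
      AA c nb par u m x ≠ jOf u m (par x) + 1 := by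
    intro x
    rw [AA]
    split
    · exact nthc_mem m _ _ hm2
    · constructor
      · rcases fb_mem (jOf u m (par x) + 1) with h | h <;> rw [h] <;>
          simp only [Finset.mem_Icc] <;> omega
      · exact fb_ne _
  have hadjch : ∀ x w, G.Adj x w → x ∈ chSet u m → w ∉ chSet u m → par w = x := by
    intro x w hadj hx hw
    rcases hpedge x w hadj with h | h
    · exact absurd (h ▸ hparch x hx) hw
    · exact h
  -- one-sided properness
  have hkey : ∀ x w, G.Adj x w → par w = x →
      colF c nb par u m x ≠ colF c nb par u m w := by
    intro x w hadj hpw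
    by_cases hwch : w ∈ chSet u m
    · obtain ⟨j, hj, hje⟩ := hwch
      by_cases h0 : j = 0
      · exfalso
        rw [h0, hu0] at hje
        rw [← hje, hproot] at hpw
        exact hadj.ne (by rw [← hpw, ← hje])
      · have hch := hchain j hj h0
        rw [← hje] at hpw
        rw [hch.2.2.1] at hpw
        have hclt : clr j < m := lt_trans (clr_lt h0) hj
        rw [← hje, ← hpw, hcolch (clr j) hclt, hcolch j hj]
        have := clr_lt h0
        omega
    · have hdw : depT par (chSet u m) w = depT par (chSet u m) x + 1 := by
        rw [hdepS w hwch, hpw]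
      by_cases hxch : x ∈ chSet u m
      · have hdx := hdep0 x hxch
        have hdw1 : depT par (chSet u m) w = 1 := by omega
        have hcw : colF c nb par u m w = AA c nb par u m w := by
          rw [colF, if_neg hwch, if_pos hdw1]
        have hcx : colF c nb par u m x = jOf u m x + 1 := by rw [colF, if_pos hxch]
        rw [hcx, hcw]
        have hne := (hAA w).2
        rw [hpw] at hne
        exact fun h => hne h.symm
      · have hdx := hdepS x hxch
        by_cases hdx1 : depT par (chSet u m) x = 1
        · have hcx : colF c nb par u m x = AA c nb par u m x := by
            rw [colF, if_neg hxch, if_pos hdx1]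
          have hdw2 : depT par (chSet u m) w = 2 := by omega
          have hasw : asgnT par (chSet u m) w = x := by
            rw [asgnT, hdw2]
            simpa using hpw
          have hcw : colF c nb par u m w = fb (AA c nb par u m x) := by
            rw [colF, if_neg hwch, if_neg (by omega), if_pos (by rw [hdw2]; decide), hasw]
          rw [hcx, hcw]
          exact (fb_ne _).symm
        · have hdx2 : 2 ≤ depT par (chSet u m) x := by omega
          have hasw : asgnT par (chSet u m) w = asgnT par (chSet u m) x := by
            rw [asgnT, asgnT, hdw,
              show depT par (chSet u m) x + 1 - 1 = (depT par (chSet u m) x - 1) + 1 by omega,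
              Function.iterate_succ_apply, hpw]
          have hcx : colF c nb par u m x =
              (if Even (depT par (chSet u m) x)
                then fb (AA c nb par u m (asgnT par (chSet u m) x))
                else fb (fb (AA c nb par u m (asgnT par (chSet u m) x)))) := by
            rw [colF, if_neg hxch, if_neg hdx1]
          have hcw : colF c nb par u m w =
              (if Even (depT par (chSet u m) w)
                then fb (AA c nb par u m (asgnT par (chSet u m) x))
                else fb (fb (AA c nb par u m (asgnT par (chSet u m) x)))) := by
            rw [colF, if_neg hwch, if_neg (by omega), hasw]
          rw [hcx, hcw, hdw]
          generalize AA c nb par u m (asgnT par (chSet u m) x) = q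
          rcases Nat.even_or_odd (depT par (chSet u m) x) with he | he
          · rw [if_pos he, if_neg (by simp [Nat.even_add_one, he])]
            exact (fb_ne (fb q)).symm
          · have hne : ¬ Even (depT par (chSet u m) x) := by
              simpa [Nat.even_iff, Nat.odd_iff] using he
            rw [if_neg hne, if_pos (by rw [Nat.even_add_one]; exact hne)]
            exact fb_ne (fb q)
  refine ⟨?_, ?_, ?_⟩
  · intro v
    rw [colF]
    split
    · rename_i h
      have := jOf_lt h
      simp only [Finset.mem_Icc]
      omega
    · split
      · exact (hAA v).1
      · split <;>
        · rcases fb_mem _ with h | h <;> rw [h] <;> simp only [Finset.mem_Icc] <;> omega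
  · intro v w hadj
    rcases hpedge v w hadj with h | h
    · exact (hkey w v hadj.symm h).symm
    · exact hkey v w hadj h
  · intro i hi
    rw [Finset.mem_Icc] at hi
    refine ⟨u (i - 1), by rw [hcolch (i - 1) (by omega)]; omega, ?_⟩
    intro q hq hqi
    rw [Finset.mem_Icc] at hq
    have hjm : i - 1 < m := by omega
    by_cases hqN : q ∈ NN m (i - 1)
    · obtain ⟨idx, hidx, hgq⟩ :=
        List.mem_iff_getElem.mp ((Finset.mem_sort (α := ℕ) (· ≤ ·)).mpr hqN)
      have hcard : (NN m (i - 1)).card ≤ m - 2 := NN_card m (i - 1) hm2 hjm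
      have hidx2 : idx < (NN m (i - 1)).card := by rwa [Finset.length_sort] at hidx
      have hi'lt : idx + 1 < c (u (i - 1)) := by have := hcch (i - 1) hjm; omega
      have hnbx := hnb (u (i - 1)) (idx + 1) (by omega) hi'lt
      set x := nb (u (i - 1)) (idx + 1) with hx
      have hxch : x ∉ chSet u m := by
        intro hxin
        have h1 := hcge x hxin
        have h2 := hnbx.2
        omega
      have hpx : par x = u (i - 1) := hadjch (u (i - 1)) x hnbx.1 (hchmem (i - 1) hjm) hxch
      have hdx : depT par (chSet u m) x = 1 := by
        rw [hdepS x hxch, hpx, hdep0 _ (hchmem (i - 1) hjm)]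
      refine ⟨x, hnbx.1, ?_⟩
      rw [colF, if_neg hxch, if_pos hdx, AA,
        if_pos ⟨by rw [hnbx.2]; omega, by rw [hpx, hnbx.2]⟩]
      rw [hpx, hjOfu (i - 1) hjm, hnbx.2, nthc]
      rw [show idx + 1 - 1 = idx by omega, List.getD_eq_getElem _ _ hidx]
      exact hgq
    · have hqR : q ∈ insert ((i - 1) + 1) ((nbrIdx m (i - 1)).image (· + 1)) := by
        by_contra hqR
        apply hqN
        simp only [NN, Finset.mem_sdiff]
        exact ⟨Finset.mem_Icc.mpr hq, hqR⟩
      rcases Finset.mem_insert.mp hqR with h | h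
      · exfalso; apply hqi; omega
      · obtain ⟨j', hj'mem, hj'⟩ := Finset.mem_image.mp h
        rw [nbrIdx, Finset.mem_filter, Finset.mem_range] at hj'mem
        obtain ⟨hj'm, hcases⟩ := hj'mem
        rcases hcases with ⟨hj0, hj'e⟩ | ⟨hj'0, hj'e⟩
        · refine ⟨u (clr (i - 1)), (hchain (i - 1) hjm hj0).1.symm, ?_⟩
          rw [hcolch (clr (i - 1)) (lt_trans (clr_lt hj0) hjm), ← hj', hj'e]
        · refine ⟨u j', ?_, ?_⟩
          · have hadj := (hchain j' hj'm hj'0).1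
            rw [hj'e] at hadj
            exact hadj
          · rw [hcolch j' hj'm, hj']


end GB

/-- every tree `T` with `Γ(T) ≥ 2` satisfies
`Γ(T) - ⌊log₂ (Γ(T) - 1)⌋ ≤ b(T)`. -/
theorem tree_grundy_le_bChromatic {V : Type*} [Fintype V] (G : SimpleGraph V)
    (hT : G.IsTree) (h2 : 2 ≤ grundyNumber G) :
    grundyNumber G - Nat.log 2 (grundyNumber G - 1) ≤ bChromatic G := by
  classical
  have hsurj_bound : ∀ (k' : ℕ) (c' : V → ℕ), (∀ i ∈ Finset.Icc 1 k', ∃ v, c' v = i) →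
      k' ≤ Fintype.card V := by
    intro k' c' h
    have hs : Set.SurjOn c' (Finset.univ : Finset V) (Finset.Icc 1 k') := by
      intro i hi
      obtain ⟨v, hv⟩ := h i (by simpa using hi)
      exact ⟨v, by simp, hv⟩
    have hcard := Finset.card_le_card_of_surjOn c' hs
    rw [Nat.card_Icc, Finset.card_univ] at hcard
    omega
  have hGbdd : BddAbove {k' | ∃ c' : V → ℕ, IsGrundyColoring G k' c'} := by
    refine ⟨Fintype.card V, ?_⟩
    rintro k' ⟨c', h'⟩
    exact hsurj_bound k' c' h'.2.2.1
  have hBbdd : BddAbove {k' | ∃ c' : V → ℕ, IsBColoring G k' c'} := by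
    refine ⟨Fintype.card V, ?_⟩
    rintro k' ⟨c', h'⟩
    exact hsurj_bound k' c' (fun i hi => (h'.2.2 i hi).imp fun v hv => hv.1)
  have hGne : {k' | ∃ c' : V → ℕ, IsGrundyColoring G k' c'}.Nonempty := by
    by_contra hne
    rw [Set.not_nonempty_iff_eq_empty] at hne
    have : grundyNumber G = 0 := by
      rw [grundyNumber, hne]
      simpa using csSup_empty
    omega
  have hkmem : ∃ c' : V → ℕ, IsGrundyColoring G (grundyNumber G) c' :=
    Nat.sSup_mem hGne hGbdd
  obtain ⟨c, hc⟩ := hkmem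
  set k := grundyNumber G with hkdef
  set l := Nat.log 2 (k - 1) with hldef
  have hk2 : 2 ≤ k := h2
  have hl1 : 2 ^ l ≤ k - 1 := Nat.pow_log_le_self 2 (by omega)
  have hl2 : k - 1 < 2 ^ (l + 1) := Nat.lt_pow_succ_log_self (by norm_num) _
  have hll : l ≤ k - 2 := by
    have := Nat.lt_two_pow_self (n := l)
    omega
  set m := k - l with hmdef
  obtain ⟨root, hroot⟩ := hc.2.2.1 k (Finset.mem_Icc.mpr ⟨by omega, le_refl k⟩)
  have hnbex := hc.2.2.2
  set nb : V → ℕ → V := fun v i =>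
    if h : 1 ≤ i ∧ i < c v then (hnbex v i h.1 h.2).choose else v with hnbdef
  have hnb : ∀ v i, 1 ≤ i → i < c v → G.Adj v (nb v i) ∧ c (nb v i) = i := by
    intro v i h1 h2'
    rw [hnbdef]
    simp only
    rw [dif_pos ⟨h1, h2'⟩]
    exact (hnbex v i h1 h2').choose_spec
  have hbc : IsBColoring G m
      (GB.colF c nb (GB.parT hT root) (GB.uF nb root (m - 1)) m) := by
    refine GB.main c k l m root nb (GB.uF nb root (m - 1)) (GB.parT hT root)
      (GB.lenT hT root) hroot hnb (GB.uF_zero nb root (m - 1))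
      (fun j hj => GB.uF_succ nb root (m - 1) hj) (GB.parT_root hT root)
      (fun v hv => GB.lenT_par hT hv) (fun x w h => GB.parT_edge hT root h)
      rfl hll hk2 hl2
  have hle : m ≤ bChromatic G := by
    rw [bChromatic]
    exact le_csSup hBbdd ⟨_, hbc⟩
  omega
end

section
/- Let G be a b-monotone graph containing no induced K_4 minus an edge and no induced C_4. Then ⌊Γ(G)/2⌋ ≤ b(G). -/
open SimpleGraph

/-- `K₄` minus one edge. -/
def K4minusE : SimpleGraph (Fin 4) := (completeGraph (Fin 4)).deleteEdges {s(0, 1)}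

/-- The cycle on four vertices. -/
def C4 : SimpleGraph (ZMod 4) := SimpleGraph.fromRel (fun i j => j = i + 1)

section Helpers

set_option linter.unreachableTactic false
set_option linter.unusedTactic false

lemma k4e_embed {V : Type*} {G : SimpleGraph V} {a b x y : V} (hab : a ≠ b)
    (hnab : ¬G.Adj a b) (hax : G.Adj a x) (hay : G.Adj a y) (hbx : G.Adj b x)
    (hby : G.Adj b y) (hxy : G.Adj x y) : Nonempty (K4minusE ↪g G) := by
  have h1 : a ≠ x := hax.ne
  have h2 : a ≠ y := hay.ne
  have h3 : b ≠ x := hbx.ne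
  have h4 : b ≠ y := hby.ne
  have h5 : x ≠ y := hxy.ne
  have hxa := hax.symm
  have hya := hay.symm
  have hxb := hbx.symm
  have hyb := hby.symm
  have hyx := hxy.symm
  have hnba : ¬ G.Adj b a := fun h => hnab h.symm
  refine ⟨⟨⟨![a,b,x,y], ?_⟩, ?_⟩⟩
  · intro p q hpq
    fin_cases p <;> fin_cases q <;> simp_all <;> tauto
  · intro p q
    fin_cases p <;> fin_cases q <;>
      simp_all [K4minusE, completeGraph, Sym2.eq, Sym2.rel_iff] <;> tauto

lemma c4_embed {V : Type*} {G : SimpleGraph V} {a b x y : V} (hac : a ≠ x) (hbd : b ≠ y)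
    (hnax : ¬G.Adj a x) (hnby : ¬G.Adj b y) (hab : G.Adj a b) (hbx : G.Adj b x)
    (hxy : G.Adj x y) (hya : G.Adj y a) : Nonempty (C4 ↪g G) := by
  have h1 : a ≠ b := hab.ne
  have h2 : b ≠ x := hbx.ne
  have h3 : x ≠ y := hxy.ne
  have h4 : y ≠ a := hya.ne
  have hba := hab.symm
  have hxb := hbx.symm
  have hyx := hxy.symm
  have hay := hya.symm
  have hnxa : ¬G.Adj x a := fun h => hnax h.symm
  have hnyb : ¬G.Adj y b := fun h => hnby h.symm
  set f : ZMod 4 → V := fun i => if i = 0 then a else if i = 1 then b else if i = 2 then x else y with hf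
  have hf0 : f 0 = a := rfl
  have hf1 : f 1 = b := by
    show (if (1:ZMod 4) = 0 then a else if (1:ZMod 4) = 1 then b else if (1:ZMod 4) = 2 then x else y) = b
    rw [if_neg (by decide), if_pos rfl]
  have hf2 : f 2 = x := by
    show (if (2:ZMod 4) = 0 then a else if (2:ZMod 4) = 1 then b else if (2:ZMod 4) = 2 then x else y) = x
    rw [if_neg (by decide), if_neg (by decide), if_pos rfl]
  have hf3 : f 3 = y := by
    show (if (3:ZMod 4) = 0 then a else if (3:ZMod 4) = 1 then b else if (3:ZMod 4) = 2 then x else y) = y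
    rw [if_neg (by decide), if_neg (by decide), if_neg (by decide)]
  have hadj : ∀ p q : ZMod 4, C4.Adj p q ↔ (p ≠ q ∧ (q = p + 1 ∨ p = q + 1)) := by
    intro p q; exact SimpleGraph.fromRel_adj _ p q
  have hall : ∀ i : ZMod 4, i = 0 ∨ i = 1 ∨ i = 2 ∨ i = 3 := by decide
  refine ⟨⟨⟨f, ?_⟩, ?_⟩⟩
  · intro p q
    rcases hall p with rfl|rfl|rfl|rfl <;> rcases hall q with rfl|rfl|rfl|rfl <;>
      simp only [hf0, hf1, hf2, hf3] <;> intro h <;> first | rfl | trivial | (exact absurd h ‹_›) | (exact absurd h.symm ‹_›)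
  · intro p q
    show G.Adj (f p) (f q) ↔ C4.Adj p q
    rcases hall p with rfl|rfl|rfl|rfl <;> rcases hall q with rfl|rfl|rfl|rfl <;>
      simp only [hf0, hf1, hf2, hf3] <;> rw [hadj] <;>
      first
        | exact iff_of_true ‹_› (by decide)
        | exact iff_of_false (G.irrefl) (by decide)
        | exact iff_of_false ‹_› (by decide)

lemma colors_card_le {W : Type*} [Fintype W] {k : ℕ} {c : W → ℕ}
    (h : ∀ i ∈ Finset.Icc 1 k, ∃ v, c v = i) : k ≤ Fintype.card W := by
  classical
  have hsub : Finset.Icc 1 k ⊆ Finset.univ.image c := by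
    intro i hi
    obtain ⟨v, hv⟩ := h i hi
    exact Finset.mem_image.mpr ⟨v, Finset.mem_univ v, hv⟩
  have h1 := Finset.card_le_card hsub
  have h2 := Finset.card_image_le (f := c) (s := (Finset.univ : Finset W))
  rw [Nat.card_Icc] at h1
  rw [Finset.card_univ] at h2
  omega

end Helpers

/-- for a b-monotone graph with no induced `K₄ - e` and no induced `C₄`,
`⌊Γ(G)/2⌋ ≤ b(G)`. -/
theorem K4e_C4_free_grundy_le (V : Type*) [Fintype V] (G : SimpleGraph V)
    (hb : BMonotone G) (h1 : IsEmpty (K4minusE ↪g G)) (h2 : IsEmpty (C4 ↪g G)) :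
    grundyNumber G / 2 ≤ bChromatic G := by
  classical
  set k := grundyNumber G with hkdef
  by_cases hk2 : k < 2
  · have h0 : k / 2 = 0 := by omega
    rw [h0]; exact Nat.zero_le _
  push_neg at hk2
  -- extract an optimal Grundy coloring
  have hbddg : BddAbove {k' | ∃ c : V → ℕ, IsGrundyColoring G k' c} := by
    refine ⟨Fintype.card V, fun k' hk' => ?_⟩
    obtain ⟨c, _, _, h3, _⟩ := hk'
    exact colors_card_le h3
  have hne : {k' | ∃ c : V → ℕ, IsGrundyColoring G k' c}.Nonempty := by
    by_contra hemp
    rw [Set.not_nonempty_iff_eq_empty] at hemp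
    have hzero : k = 0 := by rw [hkdef, grundyNumber, hemp]; simp
    omega
  have hmem : k ∈ {k' | ∃ c : V → ℕ, IsGrundyColoring G k' c} := by
    rw [hkdef, grundyNumber]; exact Nat.sSup_mem hne hbddg
  obtain ⟨c, hc1, hc2, hc3, hc4⟩ := hmem
  set t := k / 2 with htdef
  have ht1 : 1 ≤ t := by omega
  have htk : t ≤ k - t := by omega
  -- the top vertex
  obtain ⟨v, hv⟩ := hc3 k (Finset.mem_Icc.mpr ⟨by omega, le_rfl⟩)
  -- choice of neighbors of smaller colors
  set nbr : V → ℕ → V :=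
    fun x i => if h : 1 ≤ i ∧ i < c x then (hc4 x i h.1 h.2).choose else x with hnbrdef
  have hnbr : ∀ x i, 1 ≤ i → i < c x → G.Adj x (nbr x i) ∧ c (nbr x i) = i := by
    intro x i hi1 hi2
    have h : 1 ≤ i ∧ i < c x := ⟨hi1, hi2⟩
    simp only [hnbrdef, dif_pos h]
    exact (hc4 x i h.1 h.2).choose_spec
  have hu : ∀ i, k - t + 1 ≤ i → i ≤ k - 1 →
      G.Adj v (nbr v i) ∧ c (nbr v i) = i := by
    intro i hi1 hi2
    exact hnbr v i (by omega) (by rw [hv]; omega)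
  have hw : ∀ l j, k - t + 1 ≤ l → l ≤ k - 1 → 1 ≤ j → j ≤ t - 1 →
      G.Adj (nbr v l) (nbr (nbr v l) j) ∧ c (nbr (nbr v l) j) = j := by
    intro l j hl1 hl2 hj1 hj2
    exact hnbr (nbr v l) j hj1 (by rw [(hu l hl1 hl2).2]; omega)
  -- the vertex set of the induced subgraph
  set S : Set V := {x | x = v ∨ (∃ i, k - t + 1 ≤ i ∧ i ≤ k - 1 ∧ x = nbr v i) ∨
      (∃ l j, k - t + 1 ≤ l ∧ l ≤ k - 1 ∧ 1 ≤ j ∧ j ≤ t - 1 ∧ j + (k - t) ≠ l ∧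
        ¬ G.Adj (nbr v (j + (k - t))) (nbr v l) ∧ x = nbr (nbr v l) j)} with hSdef
  -- the b-coloring
  set φ : V → ℕ := fun x => if k - t + 1 ≤ c x then c x - (k - t) else c x with hφdef
  have hφ_high : ∀ x, k - t + 1 ≤ c x → φ x = c x - (k - t) := by
    intro x hx; simp only [hφdef]; rw [if_pos hx]
  have hφ_low : ∀ x, c x < k - t + 1 → φ x = c x := by
    intro x hx; simp only [hφdef]; rw [if_neg (by omega)]
  have hφv : φ v = t := by rw [hφ_high v (by omega)]; omega
  -- classification of the vertices of S
  have hSmem : ∀ x ∈ S, (x = v ∧ c x = k) ∨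
      (∃ i, k - t + 1 ≤ i ∧ i ≤ k - 1 ∧ x = nbr v i ∧ c x = i ∧ G.Adj v x) ∨
      (∃ l j, k - t + 1 ≤ l ∧ l ≤ k - 1 ∧ 1 ≤ j ∧ j ≤ t - 1 ∧ j + (k - t) ≠ l ∧
        ¬ G.Adj (nbr v (j + (k - t))) (nbr v l) ∧ x = nbr (nbr v l) j ∧ c x = j ∧
        G.Adj (nbr v l) x) := by
    intro x hx
    rw [hSdef] at hx
    rcases hx with rfl | ⟨i, hi1, hi2, rfl⟩ | ⟨l, j, hl1, hl2, hj1, hj2, hne', hnadj, rfl⟩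
    · exact Or.inl ⟨rfl, hv⟩
    · exact Or.inr (Or.inl ⟨i, hi1, hi2, rfl, (hu i hi1 hi2).2, (hu i hi1 hi2).1⟩)
    · exact Or.inr (Or.inr ⟨l, j, hl1, hl2, hj1, hj2, hne', hnadj, rfl,
        (hw l j hl1 hl2 hj1 hj2).2, (hw l j hl1 hl2 hj1 hj2).1⟩)
  -- the key structural lemma, using (K4-e, C4)-freeness
  have hkey : ∀ l j, k - t + 1 ≤ l → l ≤ k - 1 → 1 ≤ j → j ≤ t - 1 →
      j + (k - t) ≠ l → ¬ G.Adj (nbr v (j + (k - t))) (nbr v l) →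
      ¬ G.Adj (nbr v (j + (k - t))) (nbr (nbr v l) j) := by
    intro l j hl1 hl2 hj1 hj2 hne' hnadj hAdj
    obtain ⟨hva, hca⟩ := hu (j + (k - t)) (by omega) (by omega)
    obtain ⟨hvb, hcb⟩ := hu l hl1 hl2
    obtain ⟨hbw, hcw⟩ := hw l j hl1 hl2 hj1 hj2
    have habne : nbr v (j + (k - t)) ≠ nbr v l := by
      intro h; apply hne'; rw [← hca, h, hcb]
    have hvwne : v ≠ nbr (nbr v l) j := by
      intro h; rw [← h] at hcw; rw [hv] at hcw; omega
    by_cases hvw : G.Adj v (nbr (nbr v l) j)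
    · exact (k4e_embed habne hnadj hva.symm hAdj hvb.symm hbw hvw).elim h1.false
    · exact (c4_embed hvwne habne hvw hnadj hva hAdj hbw.symm hvb.symm).elim h2.false
  -- properness of φ on S
  have hproper : ∀ x ∈ S, ∀ y ∈ S, G.Adj x y → φ x ≠ φ y := by
    have key2 : ∀ x ∈ S, ∀ y ∈ S,
        (∃ i, k - t + 1 ≤ i ∧ i ≤ k - 1 ∧ x = nbr v i ∧ c x = i ∧ G.Adj v x) →
        (∃ l j, k - t + 1 ≤ l ∧ l ≤ k - 1 ∧ 1 ≤ j ∧ j ≤ t - 1 ∧ j + (k - t) ≠ l ∧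
          ¬ G.Adj (nbr v (j + (k - t))) (nbr v l) ∧ y = nbr (nbr v l) j ∧ c y = j ∧
          G.Adj (nbr v l) y) → G.Adj x y → φ x ≠ φ y := by
      rintro x hx y hy ⟨i, hi1, hi2, rfl, hcx, hvx⟩
        ⟨l, j, hl1, hl2, hj1, hj2, hne', hnadj, rfl, hcy, hly⟩ hadj heq
      rw [hφ_high _ (by omega), hφ_low _ (by omega)] at heq
      have hij : i = j + (k - t) := by omega
      rw [hij] at hadj
      exact hkey l j hl1 hl2 hj1 hj2 hne' hnadj hadj
    intro x hx y hy hadj heq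
    rcases hSmem x hx with ⟨rfl, hcx⟩ | hx' | hx'
    · rcases hSmem y hy with ⟨rfl, hcy⟩ | ⟨i, hi1, hi2, _, hcy, _⟩ |
        ⟨l, j, hl1, hl2, hj1, hj2, _, _, _, hcy, _⟩
      · exact G.irrefl hadj
      · rw [hφv, hφ_high _ (by omega)] at heq; omega
      · rw [hφv, hφ_low _ (by omega)] at heq; omega
    · rcases hSmem y hy with ⟨rfl, hcy⟩ | hy' | hy'
      · obtain ⟨i, hi1, hi2, _, hcx, _⟩ := hx'
        rw [hφv, hφ_high _ (by omega)] at heq; omega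
      · obtain ⟨i, hi1, hi2, _, hcx, _⟩ := hx'
        obtain ⟨i', hi1', hi2', _, hcy, _⟩ := hy'
        rw [hφ_high _ (by omega), hφ_high _ (by omega)] at heq
        exact hc2 hadj (by omega)
      · exact key2 x hx y hy hx' hy' hadj heq
    · rcases hSmem y hy with ⟨rfl, hcy⟩ | hy' | hy'
      · obtain ⟨l, j, hl1, hl2, hj1, hj2, _, _, _, hcx, _⟩ := hx'
        rw [hφv, hφ_low _ (by omega)] at heq; omega
      · exact key2 y hy x hx hy' hx' hadj.symm heq.symm
      · obtain ⟨l, j, hl1, hl2, hj1, hj2, _, _, _, hcx, _⟩ := hx'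
        obtain ⟨l', j', hl1', hl2', hj1', hj2', _, _, _, hcy, _⟩ := hy'
        rw [hφ_low _ (by omega), hφ_low _ (by omega)] at heq
        exact hc2 hadj (by omega)
  -- membership helpers
  have hvS : v ∈ S := by rw [hSdef]; exact Or.inl rfl
  have huS : ∀ i, k - t + 1 ≤ i → i ≤ k - 1 → nbr v i ∈ S := by
    intro i hi1 hi2; rw [hSdef]; exact Or.inr (Or.inl ⟨i, hi1, hi2, rfl⟩)
  have hwS : ∀ l j, k - t + 1 ≤ l → l ≤ k - 1 → 1 ≤ j → j ≤ t - 1 →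
      j + (k - t) ≠ l → ¬ G.Adj (nbr v (j + (k - t))) (nbr v l) →
      nbr (nbr v l) j ∈ S := by
    intro l j hl1 hl2 hj1 hj2 hne' hnadj; rw [hSdef]
    exact Or.inr (Or.inr ⟨l, j, hl1, hl2, hj1, hj2, hne', hnadj, rfl⟩)
  -- the b-coloring of G.induce S
  have hbcol : IsBColoring (G.induce S) t (fun x => φ x.1) := by
    refine ⟨?_, ?_, ?_⟩
    · rintro ⟨x, hx⟩
      show φ x ∈ Finset.Icc 1 t
      rcases hSmem x hx with ⟨rfl, hcx⟩ | ⟨i, hi1, hi2, _, hcx, _⟩ |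
          ⟨l, j, hl1, hl2, hj1, hj2, _, _, _, hcx, _⟩ <;>
        refine Finset.mem_Icc.mpr ?_
      · rw [hφv]; omega
      · rw [hφ_high _ (by omega)]; omega
      · rw [hφ_low _ (by omega)]; omega
    · rintro ⟨x, hx⟩ ⟨y, hy⟩ hadj
      exact hproper x hx y hy hadj
    · intro m hm
      rw [Finset.mem_Icc] at hm
      by_cases hmt : m = t
      · refine ⟨⟨v, hvS⟩, by show φ v = m; rw [hφv, hmt], ?_⟩
        intro j hj hjm
        rw [Finset.mem_Icc] at hj
        have hj' : j ≤ t - 1 := by omega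
        refine ⟨⟨nbr v (j + (k - t)), huS _ (by omega) (by omega)⟩,
          (hu (j + (k - t)) (by omega) (by omega)).1, ?_⟩
        show φ (nbr v (j + (k - t))) = j
        rw [hφ_high _ (by rw [(hu (j + (k - t)) (by omega) (by omega)).2]; omega),
          (hu (j + (k - t)) (by omega) (by omega)).2]
        omega
      · have hm' : m ≤ t - 1 := by omega
        set i := m + (k - t) with hidef
        have hi1 : k - t + 1 ≤ i := by omega
        have hi2 : i ≤ k - 1 := by omega
        obtain ⟨hvi, hci⟩ := hu i hi1 hi2
        refine ⟨⟨nbr v i, huS i hi1 hi2⟩,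
          by show φ (nbr v i) = m; rw [hφ_high _ (by rw [hci]; omega), hci]; omega, ?_⟩
        intro j hj hjm
        rw [Finset.mem_Icc] at hj
        by_cases hjt : j = t
        · exact ⟨⟨v, hvS⟩, hvi.symm, by show φ v = j; rw [hφv, hjt]⟩
        · have hj' : j ≤ t - 1 := by omega
          have hji : j + (k - t) ≠ i := by omega
          obtain ⟨hvj', hcj'⟩ := hu (j + (k - t)) (by omega) (by omega)
          by_cases hA : G.Adj (nbr v (j + (k - t))) (nbr v i)
          · refine ⟨⟨nbr v (j + (k - t)), huS _ (by omega) (by omega)⟩, hA.symm, ?_⟩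
            show φ (nbr v (j + (k - t))) = j
            rw [hφ_high _ (by rw [hcj']; omega), hcj']; omega
          · obtain ⟨hadjw, hcw'⟩ := hw i j hi1 hi2 (by omega) hj'
            refine ⟨⟨nbr (nbr v i) j, hwS i j hi1 hi2 (by omega) hj' hji hA⟩, hadjw, ?_⟩
            show φ (nbr (nbr v i) j) = j
            rw [hφ_low _ (by rw [hcw']; omega), hcw']
    -- end
  have hSfin : Fintype ↥S := Fintype.ofFinite ↥S
  have hbddb : BddAbove {k' | ∃ c0 : ↥S → ℕ, IsBColoring (G.induce S) k' c0} := by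
    refine ⟨Fintype.card ↥S, fun k' hk' => ?_⟩
    obtain ⟨c0, _, _, h3⟩ := hk'
    exact colors_card_le (fun i hi => (h3 i hi).imp fun w hw => hw.1)
  have hts : t ≤ bChromatic (G.induce S) :=
    le_csSup hbddb ⟨fun x => φ x.1, hbcol⟩
  exact le_trans hts (hb S)
end

section
/- For every t ≥ 2, the graph G_t obtained by taking a complete graph K_t on vertices v_1,...,v_t and attaching to each v_i a disjoint copy K(v_i) of K_t by identifying v_i with one of its vertices, satisfies Γ(G_t) = 2t − 1 and b(G_t) = t. Moreover G_t contains no induced K_4 minus an edge and no induced C_4. -/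
open SimpleGraph

/-- The graph `G_t`: a central clique on `(i, 0)`, `i : Fin t`, together with, for each
`i`, a clique `K(v_i)` on `{(i, j) : j : Fin t}` (identifying `v_i = (i, 0)`). -/
def Gt (t : ℕ) : SimpleGraph (Fin t × Fin t) where
  Adj a b := ((a.2 : ℕ) = 0 ∧ (b.2 : ℕ) = 0 ∧ a.1 ≠ b.1) ∨ (a.1 = b.1 ∧ a.2 ≠ b.2)
  symm := by
    constructor
    rintro ⟨i, j⟩ ⟨i', j'⟩ (⟨h1, h2, h3⟩ | ⟨h1, h2⟩)
    · exact Or.inl ⟨h2, h1, h3.symm⟩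
    · exact Or.inr ⟨h1.symm, h2.symm⟩
  loopless := by constructor; rintro ⟨i, j⟩ (⟨-, -, h⟩ | ⟨-, h⟩) <;> exact h rfl

section Aux

lemma Gt_adj {t : ℕ} (a b : Fin t × Fin t) : (Gt t).Adj a b ↔
    ((a.2 : ℕ) = 0 ∧ (b.2 : ℕ) = 0 ∧ (a.1 : ℕ) ≠ (b.1 : ℕ)) ∨
      ((a.1 : ℕ) = (b.1 : ℕ) ∧ (a.2 : ℕ) ≠ (b.2 : ℕ)) := by
  show (((a.2 : ℕ) = 0 ∧ (b.2 : ℕ) = 0 ∧ a.1 ≠ b.1) ∨ (a.1 = b.1 ∧ a.2 ≠ b.2)) ↔ _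
  simp [Fin.ext_iff]

lemma common_nbr {t : ℕ} {a c x y : Fin t × Fin t} (hac : ¬ (Gt t).Adj a c) (hne : a ≠ c)
    (hax : (Gt t).Adj a x) (hcx : (Gt t).Adj c x)
    (hay : (Gt t).Adj a y) (hcy : (Gt t).Adj c y) : x = y := by
  rw [Gt_adj] at hac hax hcx hay hcy
  have hne' : (a.1 : ℕ) ≠ (c.1 : ℕ) ∨ (a.2 : ℕ) ≠ (c.2 : ℕ) := by
    by_contra h'
    push_neg at h'
    exact hne (Prod.ext (Fin.ext h'.1) (Fin.ext h'.2))
  have : (x.1 : ℕ) = (y.1 : ℕ) ∧ (x.2 : ℕ) = (y.2 : ℕ) := by omega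
  exact Prod.ext (Fin.ext this.1) (Fin.ext this.2)

lemma grundy_mem (t : ℕ) (ht : 2 ≤ t) :
    IsGrundyColoring (Gt t) (2*t-1)
      (fun v => if (v.2 : ℕ) = 0 then t + (v.1 : ℕ) else (v.2 : ℕ)) := by
  refine ⟨?_, ?_, ?_, ?_⟩
  · intro v
    have := v.1.isLt; have := v.2.isLt
    simp only [Finset.mem_Icc]
    split_ifs <;> omega
  · intro v w hadj
    rw [Gt_adj] at hadj
    have := v.1.isLt; have := v.2.isLt; have := w.1.isLt; have := w.2.isLt
    dsimp only
    split_ifs <;> omega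
  · intro i hi
    simp only [Finset.mem_Icc] at hi
    by_cases hit : i < t
    · refine ⟨(⟨0, by omega⟩, ⟨i, by omega⟩), ?_⟩
      simp only [Fin.val_mk, eq_self_iff_true, true_and, and_true, false_or, or_false]
      split_ifs <;> omega
    · refine ⟨(⟨i - t, by omega⟩, ⟨0, by omega⟩), ?_⟩
      simp only [Fin.val_mk, eq_self_iff_true, true_and, and_true, false_or, or_false]
      split_ifs <;> omega
  · intro v i hi1 hiv
    have hv1 := v.1.isLt; have hv2 := v.2.isLt
    dsimp only at hiv
    by_cases h0 : (v.2 : ℕ) = 0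
    · rw [if_pos h0] at hiv
      by_cases hit : i < t
      · refine ⟨(v.1, ⟨i, by omega⟩), ?_, ?_⟩
        · rw [Gt_adj]; simp only [Fin.val_mk, eq_self_iff_true, true_and, and_true, false_or, or_false]; omega
        · simp only [Fin.val_mk, eq_self_iff_true, true_and, and_true, false_or, or_false]; split_ifs <;> omega
      · refine ⟨(⟨i - t, by omega⟩, ⟨0, by omega⟩), ?_, ?_⟩
        · rw [Gt_adj]; simp only [Fin.val_mk, eq_self_iff_true, true_and, and_true, false_or, or_false]; omega
        · simp only [Fin.val_mk, eq_self_iff_true, true_and, and_true, false_or, or_false]; split_ifs <;> omega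
    · rw [if_neg h0] at hiv
      refine ⟨(v.1, ⟨i, by omega⟩), ?_, ?_⟩
      · rw [Gt_adj]; simp only [Fin.val_mk, eq_self_iff_true, true_and, and_true, false_or, or_false]; omega
      · simp only [Fin.val_mk, eq_self_iff_true, true_and, and_true, false_or, or_false]; split_ifs <;> omega

lemma grundy_ub (t : ℕ) (ht : 2 ≤ t) (k : ℕ) (c : Fin t × Fin t → ℕ)
    (h : IsGrundyColoring (Gt t) k c) : k ≤ 2 * t - 1 := by
  classical
  by_contra hk
  push_neg at hk
  obtain ⟨h1, h2, h3, h4⟩ := h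
  obtain ⟨v, hv⟩ := h3 k (by simp only [Finset.mem_Icc]; omega)
  have hw : ∀ i, 1 ≤ i → i < k → ∃ w, (Gt t).Adj v w ∧ c w = i := by
    intro i hi1 hik; exact h4 v i hi1 (hv ▸ hik)
  set f : ℕ → Fin t × Fin t :=
    fun i => if hi : 1 ≤ i ∧ i < k then (hw i hi.1 hi.2).choose else v with hf
  have hfspec : ∀ i ∈ Finset.Icc 1 (k-1), (Gt t).Adj v (f i) ∧ c (f i) = i := by
    intro i hi
    simp only [Finset.mem_Icc] at hi
    have hi' : 1 ≤ i ∧ i < k := ⟨hi.1, by omega⟩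
    simp only [hf, dif_pos hi']
    exact (hw i hi'.1 hi'.2).choose_spec
  haveI : NeZero t := ⟨by omega⟩
  set A : Finset (Fin t × Fin t) := Finset.univ.image (fun i : Fin t => (i, (0 : Fin t)))
    with hA
  set B : Finset (Fin t × Fin t) := Finset.univ.image (fun j : Fin t => (v.1, j)) with hB
  have hmemA : ∀ b : Fin t × Fin t, (b.2 : ℕ) = 0 → b ∈ A := by
    intro b hb
    exact Finset.mem_image.mpr ⟨b.1, Finset.mem_univ _,
      Prod.ext rfl (Fin.ext (by simpa using hb.symm))⟩
  have hmemB : ∀ b : Fin t × Fin t, b.1 = v.1 → b ∈ B := by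
    intro b hb
    exact Finset.mem_image.mpr ⟨b.2, Finset.mem_univ _, Prod.ext hb.symm rfl⟩
  have hcardA : A.card = t := by
    rw [hA, Finset.card_image_of_injective _ (fun a b hab => (Prod.ext_iff.mp hab).1)]
    simp
  have hcardB : B.card = t := by
    rw [hB, Finset.card_image_of_injective _ (fun a b hab => (Prod.ext_iff.mp hab).2)]
    simp
  have hinter : A ∩ B = {(v.1, (0 : Fin t))} := by
    ext b
    simp only [Finset.mem_inter, hA, hB, Finset.mem_image, Finset.mem_univ, true_and,
      Finset.mem_singleton]
    constructor
    · rintro ⟨⟨i, rfl⟩, ⟨j, hj⟩⟩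
      obtain ⟨hj1, hj2⟩ := Prod.ext_iff.mp hj
      simp_all
    · rintro rfl
      exact ⟨⟨v.1, rfl⟩, ⟨0, rfl⟩⟩
  have hcardU : (A ∪ B).card = 2 * t - 1 := by
    have := Finset.card_union_add_card_inter A B
    rw [hinter, hcardA, hcardB] at this
    simp only [Finset.card_singleton] at this
    omega
  have hvU : v ∈ A ∪ B := Finset.mem_union_right _ (hmemB v rfl)
  have hkey := Finset.card_le_card_of_injOn f
    (fun i hi => ?maps) (fun i hi i' hi' he => ?inj)
    (s := Finset.Icc 1 (k-1)) (t := (A ∪ B).erase v)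
  case maps =>
    obtain ⟨hadj, -⟩ := hfspec i hi
    rw [Finset.mem_coe, Finset.mem_erase]
    refine ⟨hadj.ne', ?_⟩
    rw [Gt_adj] at hadj
    rcases hadj with ⟨-, h0, -⟩ | ⟨hh, -⟩
    · exact Finset.mem_union_left _ (hmemA _ h0)
    · exact Finset.mem_union_right _ (hmemB _ (Fin.ext hh.symm))
  case inj =>
    have e1 := (hfspec i (by simpa using hi)).2
    have e2 := (hfspec i' (by simpa using hi')).2
    rw [← e1, ← e2, he]
  rw [Nat.card_Icc, Finset.card_erase_of_mem hvU, hcardU] at hkey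
  omega

lemma b_mem (t : ℕ) (ht : 2 ≤ t) :
    IsBColoring (Gt t) t
      (fun v => (if (v.1 : ℕ) + (v.2 : ℕ) < t then (v.1 : ℕ) + (v.2 : ℕ)
        else (v.1 : ℕ) + (v.2 : ℕ) - t) + 1) := by
  refine ⟨?_, ?_, ?_⟩
  · intro v
    have := v.1.isLt; have := v.2.isLt
    simp only [Finset.mem_Icc]
    split_ifs <;> omega
  · intro v w hadj
    rw [Gt_adj] at hadj
    have := v.1.isLt; have := v.2.isLt; have := w.1.isLt; have := w.2.isLt
    dsimp only
    split_ifs <;> omega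
  · intro m hm
    simp only [Finset.mem_Icc] at hm
    refine ⟨(⟨m - 1, by omega⟩, ⟨0, by omega⟩), ?_, ?_⟩
    · simp only [Fin.val_mk, eq_self_iff_true, true_and, and_true, false_or, or_false]
      split_ifs <;> omega
    · intro j hj hne
      simp only [Finset.mem_Icc] at hj
      refine ⟨(⟨m - 1, by omega⟩, ⟨if m < j then j - m else j + t - m, by split_ifs <;> omega⟩), ?_, ?_⟩
      · rw [Gt_adj]; simp only [Fin.val_mk, eq_self_iff_true, true_and, and_true, false_or, or_false]; split_ifs <;> omega
      · simp only [Fin.val_mk, eq_self_iff_true, true_and, and_true, false_or, or_false]; split_ifs <;> omega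

lemma b_ub (t : ℕ) (ht : 2 ≤ t) (k : ℕ) (c : Fin t × Fin t → ℕ)
    (h : IsBColoring (Gt t) k c) : k ≤ t := by
  classical
  by_contra hk
  push_neg at hk
  obtain ⟨h1, h2, h3⟩ := h
  haveI : NeZero t := ⟨by omega⟩
  set v : ℕ → Fin t × Fin t :=
    fun i => if hi : i ∈ Finset.Icc 1 k then (h3 i hi).choose else (0, 0) with hvdef
  have hvspec : ∀ i ∈ Finset.Icc 1 k, c (v i) = i ∧
      ∀ j ∈ Finset.Icc 1 k, j ≠ i → ∃ w, (Gt t).Adj (v i) w ∧ c w = j := by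
    intro i hi
    simp only [hvdef, dif_pos hi]
    exact (h3 i hi).choose_spec
  have hcentral : ∀ i ∈ Finset.Icc 1 k, ((v i).2 : ℕ) = 0 := by
    intro i hi
    by_contra hj
    obtain ⟨hci, hdom⟩ := hvspec i hi
    set g : ℕ → Fin t × Fin t :=
      fun j => if hj' : j ∈ Finset.Icc 1 k ∧ j ≠ i then (hdom j hj'.1 hj'.2).choose
        else (0, 0) with hgdef
    have hgspec : ∀ j ∈ (Finset.Icc 1 k).erase i, (Gt t).Adj (v i) (g j) ∧ c (g j) = j := by
      intro j hj'
      rw [Finset.mem_erase] at hj'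
      simp only [hgdef, dif_pos (And.intro hj'.2 hj'.1)]
      exact (hdom j hj'.2 hj'.1).choose_spec
    set T : Finset (Fin t × Fin t) :=
      (Finset.univ.image (fun l : Fin t => ((v i).1, l))).erase (v i) with hT
    have hkey := Finset.card_le_card_of_injOn g
      (fun j hjm => ?maps) (fun j hjm j' hjm' he => ?inj)
      (s := (Finset.Icc 1 k).erase i) (t := T)
    case maps =>
      obtain ⟨hadj, -⟩ := hgspec j hjm
      rw [hT, Finset.mem_coe, Finset.mem_erase]
      refine ⟨hadj.ne', ?_⟩
      rw [Gt_adj] at hadj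
      rcases hadj with ⟨h0, -, -⟩ | ⟨hh, -⟩
      · exact absurd h0 hj
      · exact Finset.mem_image.mpr ⟨(g j).2, Finset.mem_univ _, Prod.ext (Fin.ext hh) rfl⟩
    case inj =>
      have e1 := (hgspec j (Finset.mem_coe.mp hjm)).2
      have e2 := (hgspec j' (Finset.mem_coe.mp hjm')).2
      rw [← e1, ← e2, he]
    have hTcard : T.card = t - 1 := by
      rw [hT, Finset.card_erase_of_mem
        (Finset.mem_image.mpr ⟨(v i).2, Finset.mem_univ _, rfl⟩),
        Finset.card_image_of_injective _ (fun a b hab => (Prod.ext_iff.mp hab).2)]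
      simp
    rw [Finset.card_erase_of_mem hi, Nat.card_Icc, hTcard] at hkey
    simp only [Finset.mem_Icc] at hi
    omega
  have hkey := Finset.card_le_card_of_injOn (fun i => (v i).1)
    (fun i _ => Finset.mem_univ _) (fun i hi i' hi' he => ?inj)
    (s := Finset.Icc 1 k) (t := Finset.univ)
  case inj =>
    have hi'' : i ∈ Finset.Icc 1 k := by simpa using hi
    have hi''' : i' ∈ Finset.Icc 1 k := by simpa using hi'
    have hvv : v i = v i' := Prod.ext he
      (Fin.ext (by rw [hcentral i hi'', hcentral i' hi''']))
    rw [← (hvspec i hi'').1, ← (hvspec i' hi''').1, hvv]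
  rw [Nat.card_Icc] at hkey
  simp only [Finset.card_univ, Fintype.card_fin] at hkey
  omega

end Aux

/-- `Γ(G_t) = 2t - 1`, `b(G_t) = t`, and `G_t` has no induced `K₄ - e`
and no induced `C₄`. -/
theorem Gt_properties (t : ℕ) (ht : 2 ≤ t) :
    grundyNumber (Gt t) = 2 * t - 1 ∧ bChromatic (Gt t) = t ∧
      IsEmpty (K4minusE ↪g Gt t) ∧ IsEmpty (C4 ↪g Gt t) := by
  refine ⟨?_, ?_, ?_, ?_⟩
  · have hmem : 2 * t - 1 ∈ {k | ∃ c : Fin t × Fin t → ℕ, IsGrundyColoring (Gt t) k c} :=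
      ⟨_, grundy_mem t ht⟩
    have hub : ∀ k ∈ {k | ∃ c : Fin t × Fin t → ℕ, IsGrundyColoring (Gt t) k c},
        k ≤ 2 * t - 1 := by
      rintro k ⟨c, hc⟩; exact grundy_ub t ht k c hc
    exact le_antisymm (csSup_le ⟨_, hmem⟩ hub) (le_csSup ⟨2 * t - 1, fun x hx => hub x hx⟩ hmem)
  · have hmem : t ∈ {k | ∃ c : Fin t × Fin t → ℕ, IsBColoring (Gt t) k c} :=
      ⟨_, b_mem t ht⟩
    have hub : ∀ k ∈ {k | ∃ c : Fin t × Fin t → ℕ, IsBColoring (Gt t) k c}, k ≤ t := by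
      rintro k ⟨c, hc⟩; exact b_ub t ht k c hc
    exact le_antisymm (csSup_le ⟨_, hmem⟩ hub) (le_csSup ⟨t, fun x hx => hub x hx⟩ hmem)
  · constructor
    intro f
    have hA : ∀ a b : Fin 4, K4minusE.Adj a b → (Gt t).Adj (f a) (f b) :=
      fun a b h => f.map_rel_iff.mpr h
    have h01 : ¬ (Gt t).Adj (f 0) (f 1) := by
      rw [f.map_rel_iff]
      simp [K4minusE, deleteEdges_adj]
    have h23 : f 2 = f 3 := by
      refine common_nbr h01 (f.injective.ne (by decide)) ?_ ?_ ?_ ?_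
      · exact hA 0 2 (by simp [K4minusE, deleteEdges_adj, Sym2.eq, Sym2.rel_iff'])
      · exact hA 1 2 (by simp [K4minusE, deleteEdges_adj, Sym2.eq, Sym2.rel_iff'])
      · exact hA 0 3 (by simp [K4minusE, deleteEdges_adj, Sym2.eq, Sym2.rel_iff'])
      · exact hA 1 3 (by simp [K4minusE, deleteEdges_adj, Sym2.eq, Sym2.rel_iff'])
    exact absurd (f.injective h23) (by decide)
  · constructor
    intro f
    have hA : ∀ a b : ZMod 4, C4.Adj a b → (Gt t).Adj (f a) (f b) :=
      fun a b h => f.map_rel_iff.mpr h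
    have h02 : ¬ (Gt t).Adj (f 0) (f 2) := by
      rw [f.map_rel_iff]
      simp [C4, fromRel_adj]
      decide
    have h13 : f 1 = f 3 := by
      refine common_nbr h02 (f.injective.ne (by decide)) ?_ ?_ ?_ ?_
      · exact hA 0 1 (by simp [C4, fromRel_adj]; decide)
      · exact hA 2 1 (by simp [C4, fromRel_adj]; decide)
      · exact hA 0 3 (by simp [C4, fromRel_adj]; decide)
      · exact hA 2 3 (by simp [C4, fromRel_adj]; decide)
    exact absurd (f.injective h13) (by decide)
end

section
/- For any graph G with Grundy number k, there exist vertices u_1, ..., u_{⌈k/2⌉} such that deg(u_j) ≥ k − j for each j; hence the non-increasing degree sequence satisfies d_{⌊k/2⌋} ≥ ⌈k/2⌉ ≥ ⌊k/2⌋ − 1, which yields m(G) ≥ ⌊Γ(G)/2⌋. -/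
open SimpleGraph

private lemma degree_ge_aux {V : Type*} [Fintype V] (G : SimpleGraph V) {k : ℕ} {c : V → ℕ}
    (h : IsGrundyColoring G k c) (v : V) : c v - 1 ≤ (G.neighborSet v).ncard := by
  classical
  obtain ⟨hb, hp, hu, hd⟩ := h
  set f : ℕ → V := fun i => if h : 1 ≤ i ∧ i < c v then (hd v i h.1 h.2).choose else v with hf
  have hadj : ∀ i, 1 ≤ i → i < c v → G.Adj v (f i) ∧ c (f i) = i := by
    intro i h1 h2
    simp only [hf, dif_pos (⟨h1, h2⟩ : 1 ≤ i ∧ i < c v)]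
    exact (hd v i h1 h2).choose_spec
  have hcard : (Finset.Icc 1 (c v - 1)).card ≤ (G.neighborFinset v).card := by
    apply Finset.card_le_card_of_injOn f
    · intro i hi
      simp only [Finset.mem_coe, Finset.mem_Icc] at hi
      exact (G.mem_neighborFinset v (f i)).mpr (hadj i hi.1 (by omega)).1
    · intro i hi j hj hij
      simp only [Finset.coe_Icc, Set.mem_Icc] at hi hj
      have h1 := (hadj i hi.1 (by omega)).2
      have h2 := (hadj j hj.1 (by omega)).2
      rw [hij] at h1
      omega
  have hn : (G.neighborSet v).ncard = (G.neighborFinset v).card := by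
    rw [SimpleGraph.neighborFinset_def, Set.ncard_eq_toFinset_card']
  rw [Nat.card_Icc] at hcard
  omega

private lemma grundy_bdd {V : Type*} [Fintype V] (G : SimpleGraph V) :
    BddAbove {k | ∃ c : V → ℕ, IsGrundyColoring G k c} := by
  classical
  refine ⟨Fintype.card V, fun k hk => ?_⟩
  obtain ⟨c, hb, hp, hu, hd⟩ := hk
  rcases Nat.eq_zero_or_pos k with rfl | hk0
  · exact Nat.zero_le _
  obtain ⟨v0, -⟩ := hu 1 (Finset.mem_Icc.mpr ⟨le_refl _, hk0⟩)
  set g : ℕ → V := fun i => if h : i ∈ Finset.Icc 1 k then (hu i h).choose else v0 with hg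
  have hcg : ∀ i ∈ Finset.Icc 1 k, c (g i) = i := by
    intro i hi
    simp only [hg, dif_pos hi]
    exact (hu i hi).choose_spec
  calc k = (Finset.Icc 1 k).card := by rw [Nat.card_Icc]; omega
    _ ≤ Finset.univ.card := by
        apply Finset.card_le_card_of_injOn g (fun i _ => Finset.mem_univ _)
        intro i hi j hj hij
        rw [Finset.mem_coe] at hi hj
        have h1 := hcg i hi
        have h2 := hcg j hj
        rw [hij] at h1
        omega
    _ = Fintype.card V := rfl

private lemma mparam_bdd {V : Type*} [Fintype V] (G : SimpleGraph V) :
    BddAbove {k | ∃ s : Finset V, s.card = k ∧ ∀ v ∈ s, k - 1 ≤ (G.neighborSet v).ncard} := by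
  refine ⟨Fintype.card V, fun k hk => ?_⟩
  obtain ⟨s, hs, -⟩ := hk
  exact hs ▸ Finset.card_le_univ s

/-- with `k = Γ(G)`, there are distinct vertices `u_1, …, u_{⌈k/2⌉}` with
`deg (u_j) ≥ k - j`; in particular `m(G) ≥ ⌊Γ(G)/2⌋`. -/
theorem mParam_ge_half_grundy {V : Type*} [Fintype V] (G : SimpleGraph V) :
    (∃ u : Fin ((grundyNumber G + 1) / 2) → V, Function.Injective u ∧
        ∀ j : Fin ((grundyNumber G + 1) / 2), grundyNumber G - ((j : ℕ) + 1) ≤ (G.neighborSet (u j)).ncard) ∧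
      grundyNumber G / 2 ≤ mParam G :=  by
  classical
  set k := grundyNumber G with hkdef
  by_cases h0 : k = 0
  · refine ⟨⟨fun j => absurd j.isLt (by omega), fun a => absurd a.isLt (by omega),
      fun j => absurd j.isLt (by omega)⟩, ?_⟩
    have h2 : k / 2 = 0 := by omega
    rw [h2]
    exact Nat.zero_le _
  · have hne : {k | ∃ c : V → ℕ, IsGrundyColoring G k c}.Nonempty := by
      by_contra hemp
      rw [Set.not_nonempty_iff_eq_empty] at hemp
      exact h0 (by rw [hkdef, grundyNumber, hemp, csSup_empty]; rfl)
    have hmem : k ∈ {k | ∃ c : V → ℕ, IsGrundyColoring G k c} :=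
      Nat.sSup_mem hne (grundy_bdd G)
    obtain ⟨c, hc⟩ := hmem
    have hk1 : 1 ≤ k := Nat.pos_of_ne_zero h0
    have hsel : ∀ j : Fin ((k + 1) / 2), ∃ v, c v = k - (j : ℕ) := by
      intro j
      have hj := j.isLt
      exact hc.2.2.1 (k - (j : ℕ)) (Finset.mem_Icc.mpr ⟨by omega, by omega⟩)
    choose u hcu using hsel
    have hdeg : ∀ j : Fin ((k + 1) / 2), k - ((j : ℕ) + 1) ≤ (G.neighborSet (u j)).ncard := by
      intro j
      have := degree_ge_aux G hc (u j)
      rw [hcu j] at this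
      omega
    have hinj : Function.Injective u := by
      intro j1 j2 hj
      have h1 := hcu j1
      have h2 := hcu j2
      rw [hj] at h1
      have hl1 := j1.isLt
      have hl2 := j2.isLt
      exact Fin.ext (by omega)
    refine ⟨⟨u, hinj, hdeg⟩, ?_⟩
    have hhalf : k / 2 ≤ (k + 1) / 2 := by omega
    set s : Finset V := Finset.image (fun j : Fin (k / 2) => u ⟨(j : ℕ), by omega⟩) Finset.univ with hs
    have hscard : s.card = k / 2 := by
      rw [hs, Finset.card_image_of_injective _ (fun a b hab => by
        have := hinj hab
        exact Fin.ext (by simpa [Fin.ext_iff] using this)), Finset.card_univ, Fintype.card_fin]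
    apply le_csSup (mparam_bdd G)
    refine ⟨s, hscard, ?_⟩
    intro v hv
    rw [hs, Finset.mem_image] at hv
    obtain ⟨j, -, rfl⟩ := hv
    have hd := hdeg ⟨(j : ℕ), by omega⟩
    have hjl := j.isLt
    simp only at hd
    omega
end
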